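/- arXiv:2302.12495 — 3 statements merged into one kernel-verified Lean document; each statement's English description precedes it below -/
import Mathlib

section
/- Let Ω ⊂ ℝ² be a bounded open set, T > 0, and let u ∈ C([0,T];L²(Ω)) be extended by zero outside Q_T = (0,T)×Ω. Then the texture index p_u is Lipschitz continuous on the closure of Q_T: there exists a constant C > 0, depending only on Ω, G_σ, h, a, and ‖u‖_{C([0,T];L²(Ω))}, such that |p_u(t,x) − p_u(s,y)| ≤ C( |x−y| + |t−s| ) for all (t,x), (s,y) in the closure of Q_T. -/
open MeasureTheory Real Set Filter
open scoped ENNReal Topology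

noncomputable section

local notation "E2" => EuclideanSpace ℝ (Fin 2)

/-- The two-dimensional Gaussian of width `σ`. -/
def gaussian (σ : ℝ) (x : E2) : ℝ :=
  (2 * π * σ ^ 2)⁻¹ * Real.exp (-‖x‖ ^ 2 / (2 * σ ^ 2))

/-- The Cauchy edge-stopping function `g(s) = a/(a+s)`. -/
def edgeStop (a s : ℝ) : ℝ := a / (a + s)

/-- Spatial convolution `(∇G_σ ∗ u(τ,·))(x)` over `ℝ²`. -/
def gradConv (σ : ℝ) (u : ℝ → E2 → ℝ) (τ : ℝ) (x : E2) : E2 :=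
  ∫ y : E2, u τ y • gradient (gaussian σ) (x - y)

/-- The texture index `p_u(t,x) = 1 + g( (1/h) ∫_{t−h}^{t} |(∇G_σ ∗ ũ(τ,·))(x)|² dτ )`. -/
def textureIndex (σ a h : ℝ) (u : ℝ → E2 → ℝ) (t : ℝ) (x : E2) : ℝ :=
  1 + edgeStop a ((1 / h) * ∫ τ in (t - h)..t, ‖gradConv σ u τ x‖ ^ 2)

set_option linter.unusedVariables false

theorem hasFDerivAt_gaussian (σ : ℝ) (x : E2) :
    HasFDerivAt (gaussian σ) ((-(σ^2)⁻¹ * gaussian σ x) • innerSL ℝ x) x := by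
  have h1 : HasFDerivAt (fun y : E2 => ‖y‖ ^ 2) (2 • innerSL ℝ x) x :=
    (hasStrictFDerivAt_norm_sq x).hasFDerivAt
  have h2 := ((h1.neg.const_mul ((2*σ^2)⁻¹)).exp).const_mul ((2*π*σ^2)⁻¹)
  have harg : ∀ y : E2, (2*σ^2)⁻¹ * (-‖y‖^2) = -‖y‖^2 / (2*σ^2) := by
    intro y; ring
  refine (h2.congr_fderiv ?_).congr_of_eventuallyEq (Filter.Eventually.of_forall fun y => ?_)
  · ext v
    simp only [gaussian, ContinuousLinearMap.smul_apply, ContinuousLinearMap.neg_apply,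
      ContinuousLinearMap.coe_smul', Pi.smul_apply, smul_eq_mul, Pi.neg_apply, harg x]
    ring
  · simp only [gaussian, Pi.neg_apply, harg y]

theorem gradient_gaussian (σ : ℝ) (x : E2) :
    gradient (gaussian σ) x = (-(σ^2)⁻¹ * gaussian σ x) • x := by
  have h : HasGradientAt (gaussian σ) ((-(σ^2)⁻¹ * gaussian σ x) • x) x := by
    rw [hasGradientAt_iff_hasFDerivAt]
    refine (hasFDerivAt_gaussian σ x).congr_fderiv ?_
    ext v
    simp [InnerProductSpace.toDual_apply_apply, real_inner_smul_left]
  exact h.gradient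

theorem key1 (σ r : ℝ) (hσ : 0 < σ) (hr : 0 ≤ r) :
    r * Real.exp (-r^2 / (2*σ^2)) ≤ σ := by
  have h1 : (1 : ℝ) + r^2/(2*σ^2) ≤ Real.exp (r^2/(2*σ^2)) := by
    have := Real.add_one_le_exp (r^2/(2*σ^2)); linarith
  have h2 : Real.exp (-r^2 / (2*σ^2)) = (Real.exp (r^2/(2*σ^2)))⁻¹ := by
    rw [← Real.exp_neg]; ring_nf
  rw [h2]
  rw [mul_inv_le_iff₀ (Real.exp_pos _), mul_comm σ]
  have h3 : r ≤ σ * (1 + r^2/(2*σ^2)) := by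
    have hσ2 : (0:ℝ) < 2*σ^2 := by positivity
    rw [← sub_nonneg]
    field_simp
    nlinarith [sq_nonneg (r - σ), sq_nonneg σ]
  calc r ≤ σ * (1 + r^2/(2*σ^2)) := h3
    _ ≤ σ * Real.exp (r^2/(2*σ^2)) := mul_le_mul_of_nonneg_left h1 hσ.le
    _ = Real.exp (r^2/(2*σ^2)) * σ := mul_comm _ _

theorem key2 (t : ℝ) (ht : 0 ≤ t) : Real.exp (-t) * (1 + 2*t) ≤ 2 := by
  have h1 : (1 : ℝ) + t ≤ Real.exp t := by
    have := Real.add_one_le_exp t; linarith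
  have h2 : Real.exp (-t) = (Real.exp t)⁻¹ := Real.exp_neg t
  rw [h2, inv_mul_le_iff₀ (Real.exp_pos _)]
  nlinarith [Real.exp_pos t]

theorem gaussian_pos (σ : ℝ) (hσ : 0 < σ) (x : E2) : 0 < gaussian σ x := by
  unfold gaussian; positivity

theorem norm_gradient_gaussian_le (σ : ℝ) (hσ : 0 < σ) (x : E2) :
    ‖gradient (gaussian σ) x‖ ≤ (2 * π * σ ^ 2)⁻¹ / σ := by
  rw [gradient_gaussian, norm_smul]
  have hgpos := gaussian_pos σ hσ x
  have habs : ‖(-(σ^2)⁻¹ * gaussian σ x)‖ = (σ^2)⁻¹ * gaussian σ x := by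
    rw [Real.norm_eq_abs, abs_mul, abs_neg, abs_inv, abs_of_pos (by positivity : (0:ℝ) < σ^2),
      abs_of_pos hgpos]
  rw [habs]
  have hkey := key1 σ ‖x‖ hσ (norm_nonneg x)
  have : (σ^2)⁻¹ * gaussian σ x * ‖x‖
      = (σ^2)⁻¹ * (2 * π * σ ^ 2)⁻¹ * (‖x‖ * Real.exp (-‖x‖^2 / (2*σ^2))) := by
    unfold gaussian; ring
  rw [this]
  calc (σ^2)⁻¹ * (2 * π * σ ^ 2)⁻¹ * (‖x‖ * Real.exp (-‖x‖^2 / (2*σ^2)))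
      ≤ (σ^2)⁻¹ * (2 * π * σ ^ 2)⁻¹ * σ := by
        apply mul_le_mul_of_nonneg_left hkey (by positivity)
    _ = (2 * π * σ ^ 2)⁻¹ / σ := by field_simp

theorem gradient_gaussian_lip (σ : ℝ) (hσ : 0 < σ) (x z : E2) :
    ‖gradient (gaussian σ) x - gradient (gaussian σ) z‖
      ≤ (2 * (2 * π * σ ^ 2)⁻¹ / σ^2) * ‖x - z‖ := by
  set c : ℝ := (2 * π * σ ^ 2)⁻¹ with hc
  have hcpos : (0:ℝ) < c := by rw [hc]; positivity
  set Φ : E2 → E2 := fun y => (-(σ^2)⁻¹ * gaussian σ y) • y with hΦ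
  set D : E2 → (E2 →L[ℝ] E2) := fun y =>
    (-(σ^2)⁻¹ * gaussian σ y) • ContinuousLinearMap.id ℝ E2
      + ((-(σ^2)⁻¹) • ((-(σ^2)⁻¹ * gaussian σ y) • innerSL ℝ y)).smulRight y with hD
  have hderiv : ∀ y : E2, HasFDerivAt Φ (D y) y := by
    intro y
    exact ((hasFDerivAt_gaussian σ y).const_mul (-(σ^2)⁻¹)).smul (hasFDerivAt_id y)
  have hbound : ∀ y : E2, ‖D y‖ ≤ 2 * c / σ^2 := by
    intro y
    apply ContinuousLinearMap.opNorm_le_bound _ (by positivity)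
    intro v
    have hgpos := gaussian_pos σ hσ y
    have h1 : ‖D y v‖ ≤ (σ^2)⁻¹ * gaussian σ y * ‖v‖
        + (σ^2)⁻¹ * ((σ^2)⁻¹ * gaussian σ y) * (‖y‖ * ‖v‖) * ‖y‖ := by
      rw [hD]
      simp only [ContinuousLinearMap.add_apply, ContinuousLinearMap.smul_apply,
        ContinuousLinearMap.coe_id', id_eq, ContinuousLinearMap.smulRight_apply,
        innerSL_apply_apply, smul_eq_mul]
      refine (norm_add_le _ _).trans ?_
      gcongr ?_ + ?_
      · rw [norm_smul, Real.norm_eq_abs, abs_mul, abs_neg, abs_inv,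
          abs_of_pos (by positivity : (0:ℝ) < σ^2), abs_of_pos hgpos]
      · rw [norm_smul, Real.norm_eq_abs]
        have habs : |(-(σ^2)⁻¹ * (-(σ^2)⁻¹ * gaussian σ y * (inner ℝ y v : ℝ)))|
            = (σ^2)⁻¹ * ((σ^2)⁻¹ * gaussian σ y * |(inner ℝ y v : ℝ)|) := by
          rw [abs_mul, abs_mul, abs_mul, abs_neg, abs_inv,
            abs_of_pos (by positivity : (0:ℝ) < σ^2), abs_of_pos hgpos]
        rw [habs]
        have hin := abs_real_inner_le_norm y v
        have h2 : (σ^2)⁻¹ * ((σ^2)⁻¹ * gaussian σ y * |(inner ℝ y v : ℝ)|) * ‖y‖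
            = ((σ^2)⁻¹ * ((σ^2)⁻¹ * gaussian σ y) * ‖y‖) * |(inner ℝ y v : ℝ)| := by ring
        have h3 : (σ^2)⁻¹ * ((σ^2)⁻¹ * gaussian σ y) * (‖y‖ * ‖v‖) * ‖y‖
            = ((σ^2)⁻¹ * ((σ^2)⁻¹ * gaussian σ y) * ‖y‖) * (‖y‖ * ‖v‖) := by ring
        rw [h2, h3]
        exact mul_le_mul_of_nonneg_left hin (by positivity)
    refine h1.trans ?_
    have hexp : gaussian σ y = c * Real.exp (-(‖y‖^2/(2*σ^2))) := by
      unfold gaussian; rw [neg_div]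
    have hk := key2 (‖y‖^2/(2*σ^2)) (by positivity)
    have hfact : (σ^2)⁻¹ * gaussian σ y * ‖v‖
        + (σ^2)⁻¹ * ((σ^2)⁻¹ * gaussian σ y) * (‖y‖ * ‖v‖) * ‖y‖
        = (σ^2)⁻¹ * c * (Real.exp (-(‖y‖^2/(2*σ^2))) * (1 + 2*(‖y‖^2/(2*σ^2)))) * ‖v‖ := by
      rw [hexp]; field_simp
    rw [hfact]
    calc (σ^2)⁻¹ * c * (Real.exp (-(‖y‖^2/(2*σ^2))) * (1 + 2*(‖y‖^2/(2*σ^2)))) * ‖v‖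
        ≤ (σ^2)⁻¹ * c * 2 * ‖v‖ := by
          have hstep := mul_le_mul_of_nonneg_left hk
            (show (0:ℝ) ≤ (σ^2)⁻¹ * c by positivity)
          exact mul_le_mul_of_nonneg_right hstep (norm_nonneg v)
      _ = 2 * c / σ^2 * ‖v‖ := by
          rw [div_eq_mul_inv]; ring
  have hmain := convex_univ.norm_image_sub_le_of_norm_hasFDerivWithin_le
    (f := Φ) (f' := D) (fun y _ => (hderiv y).hasFDerivWithinAt)
    (fun y _ => hbound y) (mem_univ z) (mem_univ x)
  have heq : ∀ w : E2, gradient (gaussian σ) w = Φ w := fun w => gradient_gaussian σ w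
  rw [heq, heq]
  exact hmain

theorem continuous_gradient_gaussian (σ : ℝ) (hσ : 0 < σ) :
    Continuous (gradient (gaussian σ)) := by
  have hg : Continuous (gaussian σ) := by
    unfold gaussian
    exact continuous_const.mul
      (Real.continuous_exp.comp (((continuous_norm.pow 2).neg).div_const _))
  have hfun : gradient (gaussian σ) = fun x : E2 => (-(σ^2)⁻¹ * gaussian σ x) • x :=
    funext (gradient_gaussian σ)
  rw [hfun]
  exact (continuous_const.mul hg).smul continuous_id

/-- Lipschitz estimate for the edge stopping function on nonnegative reals. -/
theorem abs_edgeStop_sub_le (a : ℝ) (ha : 0 < a) (s₁ s₂ : ℝ) (h1 : 0 ≤ s₁) (h2 : 0 ≤ s₂) :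
    |edgeStop a s₁ - edgeStop a s₂| ≤ (1/a) * |s₁ - s₂| := by
  have ha1 : (0:ℝ) < a + s₁ := by linarith
  have ha2 : (0:ℝ) < a + s₂ := by linarith
  rw [edgeStop, edgeStop, div_sub_div _ _ ha1.ne' ha2.ne', abs_div]
  rw [abs_of_pos (by positivity : (0:ℝ) < (a+s₁)*(a+s₂))]
  rw [div_le_iff₀ (by positivity)]
  have hnum : |a * (a + s₂) - (a + s₁) * a| = a * |s₁ - s₂| := by
    have : a * (a + s₂) - (a + s₁) * a = a * (s₂ - s₁) := by ring
    rw [this, abs_mul, abs_of_pos ha, abs_sub_comm]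
  rw [hnum]
  have hd : a * a ≤ (a + s₁) * (a + s₂) := by nlinarith
  have habs : 0 ≤ |s₁ - s₂| := abs_nonneg _
  calc a * |s₁ - s₂| = (1/a) * |s₁ - s₂| * (a * a) := by field_simp
    _ ≤ (1/a) * |s₁ - s₂| * ((a + s₁) * (a + s₂)) := by
        apply mul_le_mul_of_nonneg_left hd (by positivity)

set_option maxHeartbeats 1000000 in
/-- For `u ∈ C([0,T];L²(Ω))` extended by zero outside `Q_T = (0,T)×Ω`, the texture
index `p_u` is Lipschitz continuous on the closure of `Q_T`, with a constant depending
only on the data. -/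
theorem statement1
    (Ω : Set E2) (hΩ_open : IsOpen Ω) (hΩ_bdd : Bornology.IsBounded Ω)
    (T : ℝ) (hT : 0 < T) (σ a h : ℝ) (hσ : 0 < σ) (ha : 0 < a) (hh : 0 < h)
    (u : ℝ → E2 → ℝ)
    (hu_meas : Measurable (Function.uncurry u))
    (hu_zero : ∀ t x, t ∉ Ioo 0 T ∨ x ∉ Ω → u t x = 0)
    (hu_mem : ∀ t, MemLp (u t) 2 volume)
    (hu_cont : ContinuousOn (fun t => (hu_mem t).toLp (u t)) (Icc 0 T)) :
    ∃ C > (0 : ℝ), ∀ t ∈ Icc 0 T, ∀ x ∈ closure Ω, ∀ s ∈ Icc 0 T, ∀ y ∈ closure Ω,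
      |textureIndex σ a h u t x - textureIndex σ a h u s y| ≤
        C * (‖x - y‖ + |t - s|) := by
  classical
  set Φ : E2 → E2 := gradient (gaussian σ) with hΦdef
  set K₀ : ℝ := (2 * π * σ ^ 2)⁻¹ / σ with hK₀
  set K₁ : ℝ := 2 * (2 * π * σ ^ 2)⁻¹ / σ^2 with hK₁
  have hK₀pos : 0 < K₀ := by rw [hK₀]; positivity
  have hK₁pos : 0 < K₁ := by rw [hK₁]; positivity
  have hΦ_bound : ∀ z : E2, ‖Φ z‖ ≤ K₀ := fun z => norm_gradient_gaussian_le σ hσ z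
  have hΦ_lip : ∀ z w : E2, ‖Φ z - Φ w‖ ≤ K₁ * ‖z - w‖ := fun z w => gradient_gaussian_lip σ hσ z w
  have hΦ_cont : Continuous Φ := continuous_gradient_gaussian σ hσ
  -- the support set
  set S : Set E2 := closure Ω with hS
  have hS_fin : volume S ≠ ∞ := hΩ_bdd.closure.measure_lt_top.ne
  have hS_meas : MeasurableSet S := isClosed_closure.measurableSet
  -- L² bound
  obtain ⟨M, hM⟩ := isCompact_Icc.exists_bound_of_continuousOn hu_cont
  set M' : ℝ := max M 0 with hM'
  have hM'0 : 0 ≤ M' := le_max_right _ _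
  have hu2 : ∀ τ, eLpNorm (u τ) 2 volume ≤ ENNReal.ofReal M' := by
    intro τ
    by_cases hτ : τ ∈ Icc 0 T
    · have hn : ‖(hu_mem τ).toLp (u τ)‖ ≤ M := hM τ hτ
      rw [Lp.norm_toLp] at hn
      have hne : eLpNorm (u τ) 2 volume ≠ ∞ := (hu_mem τ).2.ne
      rw [← ENNReal.ofReal_toReal hne]
      exact ENNReal.ofReal_le_ofReal (hn.trans (le_max_left _ _))
    · have hz : u τ = 0 := funext fun z =>
        hu_zero τ z (Or.inl (fun hm => hτ (Ioo_subset_Icc_self hm)))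
      rw [hz, eLpNorm_zero]
      exact bot_le
  -- L¹ bound
  set M₁ : ℝ := (ENNReal.ofReal M' * volume S ^ (1/2 : ℝ)).toReal with hM₁def
  have hM₁0 : 0 ≤ M₁ := ENNReal.toReal_nonneg
  have hsupp : ∀ (τ : ℝ) (z : E2), z ∉ S → u τ z = 0 := fun τ z hz =>
    hu_zero τ z (Or.inr fun hm => hz (subset_closure hm))
  have hInt : ∀ τ, Integrable (u τ) volume := by
    intro τ
    exact memLp_one_iff_integrable.mp
      ((hu_mem τ).mono_exponent_of_measure_support_ne_top (hsupp τ) hS_fin one_le_two)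
  have hL1 : ∀ τ, ∫ y, |u τ y| ≤ M₁ := by
    intro τ
    have haes := (hu_mem τ).aestronglyMeasurable
    have hind : u τ = S.indicator (u τ) := by
      funext z
      by_cases hz : z ∈ S
      · rw [indicator_of_mem hz]
      · rw [indicator_of_notMem hz]; exact hsupp τ z hz
    have h1 : eLpNorm (u τ) 1 volume = eLpNorm (u τ) 1 (volume.restrict S) := by
      conv_lhs => rw [hind]
      rw [eLpNorm_indicator_eq_eLpNorm_restrict hS_meas]
    have h2 : eLpNorm (u τ) 2 volume = eLpNorm (u τ) 2 (volume.restrict S) := by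
      conv_lhs => rw [hind]
      rw [eLpNorm_indicator_eq_eLpNorm_restrict hS_meas]
    have h3 : eLpNorm (u τ) 1 (volume.restrict S)
        ≤ eLpNorm (u τ) 2 (volume.restrict S) * (volume S) ^ (1/2 : ℝ) := by
      have := eLpNorm_le_eLpNorm_mul_rpow_measure_univ (p := 1) (q := 2)
        (μ := volume.restrict S) one_le_two (haes.restrict)
      rwa [Measure.restrict_apply_univ, show (1 / (1:ℝ≥0∞).toReal - 1 / (2:ℝ≥0∞).toReal)
        = (1/2 : ℝ) by norm_num] at this
    have h4 : eLpNorm (u τ) 1 volume ≤ ENNReal.ofReal M' * (volume S) ^ (1/2 : ℝ) := by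
      rw [h1]
      refine h3.trans ?_
      apply mul_le_mul_left _ _
      rw [← h2]; exact hu2 τ
    have hrhs_ne : ENNReal.ofReal M' * (volume S) ^ (1/2 : ℝ) ≠ ∞ :=
      ENNReal.mul_ne_top ENNReal.ofReal_ne_top
        (ENNReal.rpow_ne_top_of_nonneg (by norm_num) hS_fin)
    have h5 : ∫ y, |u τ y| = (eLpNorm (u τ) 1 volume).toReal := by
      rw [show (fun y => |u τ y|) = fun y => ‖u τ y‖ by funext y; rw [Real.norm_eq_abs]]
      rw [integral_norm_eq_lintegral_enorm haes, eLpNorm_one_eq_lintegral_enorm]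
    rw [h5, hM₁def]
    exact ENNReal.toReal_mono hrhs_ne h4
  -- integrability of convolution integrand
  have hIntg : ∀ (τ : ℝ) (x : E2), Integrable (fun y => u τ y • Φ (x - y)) volume := by
    intro τ x
    have haesm : AEStronglyMeasurable (fun y => u τ y • Φ (x - y)) volume :=
      ((hu_mem τ).aestronglyMeasurable).smul
        ((hΦ_cont.comp (continuous_const.sub continuous_id)).aestronglyMeasurable)
    refine Integrable.mono' ((hInt τ).norm.mul_const K₀) haesm
      (Filter.Eventually.of_forall fun y => ?_)
    rw [norm_smul]
    exact mul_le_mul_of_nonneg_left (hΦ_bound _) (norm_nonneg _)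
  -- bounds for gradConv
  set B : ℝ := M₁ * K₀ with hBdef
  set L : ℝ := M₁ * K₁ with hLdef
  have hB0 : 0 ≤ B := mul_nonneg hM₁0 hK₀pos.le
  have hL0 : 0 ≤ L := mul_nonneg hM₁0 hK₁pos.le
  have hGC_bound : ∀ (τ : ℝ) (x : E2), ‖gradConv σ u τ x‖ ≤ B := by
    intro τ x
    have hrfl : gradConv σ u τ x = ∫ y, u τ y • Φ (x - y) := rfl
    rw [hrfl]
    refine (norm_integral_le_integral_norm _).trans ?_
    have hle : ∫ y, ‖u τ y • Φ (x - y)‖ ≤ ∫ y, |u τ y| * K₀ := by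
      refine integral_mono (hIntg τ x).norm ((hInt τ).abs.mul_const K₀) fun y => ?_
      rw [norm_smul, Real.norm_eq_abs]
      exact mul_le_mul_of_nonneg_left (hΦ_bound _) (abs_nonneg _)
    refine hle.trans ?_
    rw [integral_mul_const]
    exact mul_le_mul_of_nonneg_right (hL1 τ) hK₀pos.le
  have hGC_lip : ∀ (τ : ℝ) (x x' : E2),
      ‖gradConv σ u τ x - gradConv σ u τ x'‖ ≤ L * ‖x - x'‖ := by
    intro τ x x'
    have hI3 : Integrable (fun y => u τ y • (Φ (x - y) - Φ (x' - y))) volume := by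
      have := (hIntg τ x).sub (hIntg τ x')
      exact this.congr (Filter.Eventually.of_forall fun y => by simp [smul_sub])
    have hsub : gradConv σ u τ x - gradConv σ u τ x'
        = ∫ y, u τ y • (Φ (x - y) - Φ (x' - y)) := by
      rw [show gradConv σ u τ x = ∫ y, u τ y • Φ (x - y) from rfl,
        show gradConv σ u τ x' = ∫ y, u τ y • Φ (x' - y) from rfl,
        ← integral_sub (hIntg τ x) (hIntg τ x')]
      congr 1
      funext y
      rw [smul_sub]
    rw [hsub]
    refine (norm_integral_le_integral_norm _).trans ?_
    have hle : ∫ y, ‖u τ y • (Φ (x - y) - Φ (x' - y))‖ ≤ ∫ y, |u τ y| * (K₁ * ‖x - x'‖) := by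
      refine integral_mono hI3.norm ((hInt τ).abs.mul_const (K₁ * ‖x - x'‖)) fun y => ?_
      rw [norm_smul, Real.norm_eq_abs]
      refine mul_le_mul_of_nonneg_left ?_ (abs_nonneg _)
      have := hΦ_lip (x - y) (x' - y)
      rwa [sub_sub_sub_cancel_right] at this
    refine hle.trans ?_
    rw [integral_mul_const]
    have := mul_le_mul_of_nonneg_right (hL1 τ) (by positivity : (0:ℝ) ≤ K₁ * ‖x - x'‖)
    calc (∫ y, |u τ y|) * (K₁ * ‖x - x'‖) ≤ M₁ * (K₁ * ‖x - x'‖) := this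
      _ = L * ‖x - x'‖ := by rw [hLdef]; ring
  -- measurability in τ
  have hq_meas : ∀ x : E2, StronglyMeasurable (fun τ => gradConv σ u τ x) := by
    intro x
    have hrfl : (fun τ => gradConv σ u τ x) = fun τ => ∫ y, u τ y • Φ (x - y) := rfl
    rw [hrfl]
    apply MeasureTheory.StronglyMeasurable.integral_prod_right'
      (f := fun p : ℝ × E2 => u p.1 p.2 • Φ (x - p.2))
    apply Measurable.stronglyMeasurable
    exact hu_meas.smul ((hΦ_cont.measurable).comp (measurable_const.sub measurable_snd))
  have hq_bd : ∀ (τ : ℝ) (x : E2), ‖(‖gradConv σ u τ x‖^2 : ℝ)‖ ≤ B^2 := by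
    intro τ x
    rw [Real.norm_eq_abs, abs_of_nonneg (by positivity)]
    have := hGC_bound τ x
    nlinarith [norm_nonneg (gradConv σ u τ x)]
  have hII : ∀ (x : E2) (α β : ℝ),
      IntervalIntegrable (fun τ => ‖gradConv σ u τ x‖^2) volume α β := by
    intro x α β
    rw [intervalIntegrable_iff]
    refine Integrable.mono' (integrableOn_const measure_Ioc_lt_top.ne)
      (((hq_meas x).measurable.norm.pow_const 2).aestronglyMeasurable.restrict)
      (Filter.Eventually.of_forall fun τ => hq_bd τ x)
  -- the inner function F
  set F : ℝ → E2 → ℝ := fun t x => (1 / h) * ∫ τ in (t - h)..t, ‖gradConv σ u τ x‖ ^ 2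
    with hFdef
  have hF_nonneg : ∀ t x, 0 ≤ F t x := by
    intro t x
    apply mul_nonneg (by positivity)
    apply intervalIntegral.integral_nonneg (by linarith)
    intro τ _; positivity
  have hq_bound : ∀ (τ : ℝ) (x : E2), ‖(‖gradConv σ u τ x‖^2 : ℝ)‖ ≤ B^2 := by
    intro τ x
    rw [Real.norm_eq_abs, abs_of_nonneg (by positivity)]
    have := hGC_bound τ x
    nlinarith [norm_nonneg (gradConv σ u τ x)]
  have hFx : ∀ (t : ℝ) (x y : E2), |F t x - F t y| ≤ (2*B*L) * ‖x - y‖ := by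
    intro t x y
    have hFr : F t x - F t y
        = (1/h) * ∫ τ in (t-h)..t, (‖gradConv σ u τ x‖^2 - ‖gradConv σ u τ y‖^2) := by
      rw [hFdef]
      simp only
      rw [intervalIntegral.integral_sub (hII x (t-h) t) (hII y (t-h) t), mul_sub]
    rw [hFr, abs_mul, abs_of_pos (by positivity : (0:ℝ) < 1/h)]
    have hptw : ∀ τ ∈ Set.uIoc (t-h) t,
        ‖(‖gradConv σ u τ x‖^2 - ‖gradConv σ u τ y‖^2 : ℝ)‖ ≤ 2*B*L*‖x - y‖ := by
      intro τ _
      set p := gradConv σ u τ x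
      set q := gradConv σ u τ y
      have hfac : ‖p‖^2 - ‖q‖^2 = (‖p‖ - ‖q‖) * (‖p‖ + ‖q‖) := by ring
      rw [Real.norm_eq_abs, hfac, abs_mul,
        abs_of_nonneg (show (0:ℝ) ≤ ‖p‖ + ‖q‖ by positivity)]
      have h1 : |‖p‖ - ‖q‖| ≤ ‖p - q‖ := abs_norm_sub_norm_le p q
      have h2 : ‖p - q‖ ≤ L * ‖x - y‖ := hGC_lip τ x y
      have h3 : ‖p‖ + ‖q‖ ≤ 2*B := by
        have := hGC_bound τ x
        have := hGC_bound τ y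
        linarith
      have habs0 : 0 ≤ |‖p‖ - ‖q‖| := abs_nonneg _
      calc |‖p‖ - ‖q‖| * (‖p‖ + ‖q‖) ≤ (L * ‖x - y‖) * (2*B) := by
            apply mul_le_mul (h1.trans h2) h3 (by positivity) (by positivity)
        _ = 2*B*L*‖x - y‖ := by ring
    have hb := intervalIntegral.norm_integral_le_of_norm_le_const hptw
    rw [Real.norm_eq_abs] at hb
    have hba : |t - (t - h)| = h := by rw [show t - (t-h) = h by ring, abs_of_pos hh]
    rw [hba] at hb
    calc 1/h * |∫ τ in (t-h)..t, (‖gradConv σ u τ x‖^2 - ‖gradConv σ u τ y‖^2)|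
        ≤ 1/h * (2*B*L*‖x - y‖ * h) := by
          exact mul_le_mul_of_nonneg_left hb (by positivity)
      _ = (2*B*L) * ‖x - y‖ := by field_simp
  have hFt : ∀ (t s : ℝ) (x : E2), |F t x - F s x| ≤ (2*B^2/h) * |t - s| := by
    intro t s x
    have hcomm := intervalIntegral.integral_interval_sub_interval_comm
      (hII x (t-h) t) (hII x (s-h) s) (hII x (t-h) (s-h))
    have hFr : F t x - F s x
        = (1/h) * ((∫ τ in (t-h)..(s-h), ‖gradConv σ u τ x‖^2)
            - ∫ τ in t..s, ‖gradConv σ u τ x‖^2) := by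
      rw [hFdef]
      simp only
      rw [← mul_sub, hcomm]
    rw [hFr, abs_mul, abs_of_pos (by positivity : (0:ℝ) < 1/h)]
    have hb1 := intervalIntegral.norm_integral_le_of_norm_le_const
      (fun τ _ => hq_bd τ x : ∀ τ ∈ Set.uIoc (t-h) (s-h), ‖(‖gradConv σ u τ x‖^2 : ℝ)‖ ≤ B^2)
    have hb2 := intervalIntegral.norm_integral_le_of_norm_le_const
      (fun τ _ => hq_bd τ x : ∀ τ ∈ Set.uIoc t s, ‖(‖gradConv σ u τ x‖^2 : ℝ)‖ ≤ B^2)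
    rw [Real.norm_eq_abs] at hb1 hb2
    have he1 : |s - h - (t - h)| = |t - s| := by rw [show s - h - (t-h) = s - t by ring, abs_sub_comm]
    rw [he1] at hb1
    have htri : |(∫ τ in (t-h)..(s-h), ‖gradConv σ u τ x‖^2)
        - ∫ τ in t..s, ‖gradConv σ u τ x‖^2|
        ≤ B^2 * |t - s| + B^2 * |s - t| := by
      refine (abs_sub _ _).trans ?_
      exact add_le_add hb1 hb2
    rw [abs_sub_comm s t] at htri
    calc 1/h * |(∫ τ in (t-h)..(s-h), ‖gradConv σ u τ x‖^2)
          - ∫ τ in t..s, ‖gradConv σ u τ x‖^2|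
        ≤ 1/h * (B^2 * |t - s| + B^2 * |t - s|) := by
          exact mul_le_mul_of_nonneg_left htri (by positivity)
      _ = (2*B^2/h) * |t - s| := by field_simp; ring
  -- conclusion
  refine ⟨(1/a) * (2*B*L + 2*B^2/h) + 1, by positivity, ?_⟩
  intro t ht x hx s hs y hy
  have hTI : textureIndex σ a h u t x - textureIndex σ a h u s y
      = edgeStop a (F t x) - edgeStop a (F s y) := by
    simp [textureIndex, hFdef]
  rw [hTI]
  have e1 : |edgeStop a (F t x) - edgeStop a (F s x)| ≤ (1/a) * ((2*B^2/h) * |t - s|) := by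
    refine (abs_edgeStop_sub_le a ha _ _ (hF_nonneg t x) (hF_nonneg s x)).trans ?_
    exact mul_le_mul_of_nonneg_left (hFt t s x) (by positivity)
  have e2 : |edgeStop a (F s x) - edgeStop a (F s y)| ≤ (1/a) * ((2*B*L) * ‖x - y‖) := by
    refine (abs_edgeStop_sub_le a ha _ _ (hF_nonneg s x) (hF_nonneg s y)).trans ?_
    exact mul_le_mul_of_nonneg_left (hFx s x y) (by positivity)
  have tri : |edgeStop a (F t x) - edgeStop a (F s y)|
      ≤ |edgeStop a (F t x) - edgeStop a (F s x)| + |edgeStop a (F s x) - edgeStop a (F s y)| := by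
    have := abs_sub_le (edgeStop a (F t x)) (edgeStop a (F s x)) (edgeStop a (F s y))
    linarith [this]
  have hfin : (1/a) * ((2*B^2/h) * |t - s|) + (1/a) * ((2*B*L) * ‖x - y‖)
      ≤ ((1/a) * (2*B*L + 2*B^2/h) + 1) * (‖x - y‖ + |t - s|) := by
    have h1 : 0 ≤ |t - s| := abs_nonneg _
    have h2 : 0 ≤ ‖x - y‖ := norm_nonneg _
    have h3 : 0 < (1:ℝ)/a := by positivity
    have h4 : 0 ≤ 2*B^2/h := by positivity
    have h5 : 0 ≤ 2*B*L := by positivity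
    nlinarith [mul_nonneg h3.le (mul_nonneg h4 h2), mul_nonneg h3.le (mul_nonneg h5 h1),
      mul_nonneg (add_nonneg h2 h1) (le_of_lt (by positivity : (0:ℝ) < 1)),
      add_nonneg h2 h1]
  linarith [tri, e1, e2, hfin]
end
end

section
/- Let Ω ⊂ ℝ^N be a bounded open set, δ ∈ (0,1], and let p_k, p ∈ C^{0,δ}(cl Ω) for k = 1, 2, … with p_k → p uniformly on cl Ω and 1 < α ≤ p_k(x) ≤ β < ∞ for all k and all x ∈ Ω. Let {f_k} be a sequence of measurable functions with limsup_{k→∞} ∫_Ω |f_k(x)|^{p_k(x)} dx < ∞, and suppose f_k converges weakly in L^α(Ω) to f, i.e., ∫_Ω f_k g dx → ∫_Ω f g dx for every g ∈ L^{α/(α−1)}(Ω). Then ∫_Ω |f(x)|^{p(x)} dx < ∞ and liminf_{k→∞} ∫_Ω |f_k(x)|^{p_k(x)} dx ≥ ∫_Ω |f(x)|^{p(x)} dx. -/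
open MeasureTheory Real Set Filter
open scoped ENNReal Topology

noncomputable section

/-- `ofReal` of an integral is at most the `lintegral` of `ofReal`. -/
lemma aux_ofReal_integral_le {X : Type*} [MeasurableSpace X] {μ : Measure X}
    {g : X → ℝ} (hg : Integrable g μ) :
    ENNReal.ofReal (∫ x, g x ∂μ) ≤ ∫⁻ x, ENNReal.ofReal (g x) ∂μ := by
  have h1 : ∫ x, g x ∂μ ≤ ∫ x, max (g x) 0 ∂μ :=
    integral_mono hg hg.pos_part fun x => le_max_left _ _
  calc ENNReal.ofReal (∫ x, g x ∂μ) ≤ ENNReal.ofReal (∫ x, max (g x) 0 ∂μ) :=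
        ENNReal.ofReal_le_ofReal h1
    _ = ∫⁻ x, ENNReal.ofReal (max (g x) 0) ∂μ :=
        ofReal_integral_eq_lintegral_ofReal hg.pos_part
          (Eventually.of_forall fun x => le_max_right _ _)
    _ = ∫⁻ x, ENNReal.ofReal (g x) ∂μ := by
        refine lintegral_congr fun x => ?_
        rcases le_or_gt (g x) 0 with h | h
        · rw [max_eq_right h, ENNReal.ofReal_zero, ENNReal.ofReal_of_nonpos h]
        · rw [max_eq_left h.le]

/-- Tangent line inequality for `x ↦ x ^ q` at `c > 0`. -/
lemma aux_bern {x c q : ℝ} (hx : 0 ≤ x) (hc : 0 < c) (hq : 1 ≤ q) :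
    c ^ q + q * c ^ (q - 1) * (x - c) ≤ x ^ q := by
  have hs : -1 ≤ x / c - 1 := by
    have : 0 ≤ x / c := div_nonneg hx hc.le
    linarith
  have h := one_add_mul_self_le_rpow_one_add hs hq
  rw [show (1 : ℝ) + (x / c - 1) = x / c by ring, Real.div_rpow hx hc.le] at h
  have hcq : (0:ℝ) < c ^ q := Real.rpow_pos_of_pos hc q
  have h2 := mul_le_mul_of_nonneg_left h hcq.le
  rw [mul_div_cancel₀ _ hcq.ne'] at h2
  refine le_trans (le_of_eq ?_) h2
  have hc1 : c ^ (q - 1) * c = c ^ q := by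
    have h := Real.rpow_add hc (q - 1) 1
    rw [Real.rpow_one] at h
    rw [← h]; norm_num
  have hc2 : c ^ (q - 1) = c ^ q / c := by
    field_simp [← hc1]
    exact hc1
  rw [hc2]
  field_simp

/-- Tangent line inequality for `t ↦ |t| ^ q`, `q > 1`. -/
lemma aux_convex {a b q : ℝ} (hq : 1 < q) :
    |b| ^ q + q * |b| ^ (q - 2) * b * (a - b) ≤ |a| ^ q := by
  rcases eq_or_ne b 0 with rfl | hb
  · simp only [abs_zero, sub_zero, mul_zero, zero_mul, add_zero]
    rw [Real.zero_rpow (by linarith : q ≠ 0)]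
    positivity
  · have hcb : 0 < |b| := abs_pos.mpr hb
    have key : |b| ^ q + q * |b| ^ (q - 1) * (|a| - |b|) ≤ |a| ^ q :=
      aux_bern (abs_nonneg a) hcb hq.le
    refine le_trans (add_le_add_right ?_ _) key
    have h1 : b * (a - b) ≤ |b| * (|a| - |b|) := by
      have hba : b * a ≤ |b| * |a| := by
        calc b * a ≤ |b * a| := le_abs_self _
          _ = |b| * |a| := abs_mul b a
      have : |b| * |b| = b * b := (abs_mul_abs_self b)
      nlinarith
    have h2 : |b| ^ (q - 2) * |b| = |b| ^ (q - 1) := by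
      have h := Real.rpow_add hcb (q - 2) 1
      rw [Real.rpow_one] at h
      rw [← h]; congr 1; ring
    have h3 : (0:ℝ) ≤ q * |b| ^ (q - 2) :=
      mul_nonneg (by linarith) (Real.rpow_nonneg (abs_nonneg b) _)
    calc q * |b| ^ (q - 2) * b * (a - b) = q * |b| ^ (q - 2) * (b * (a - b)) := by ring
      _ ≤ q * |b| ^ (q - 2) * (|b| * (|a| - |b|)) := mul_le_mul_of_nonneg_left h1 h3
      _ = q * (|b| ^ (q - 2) * |b|) * (|a| - |b|) := by ring
      _ = q * |b| ^ (q - 1) * (|a| - |b|) := by rw [h2]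

/-- Comparison of powers with nearby exponents. -/
lemma aux_gap {t q r : ℝ} (ht : 0 ≤ t) (hq : 1 ≤ q) (hqr : q ≤ r) :
    t ^ q ≤ t ^ r + (r - q) := by
  rcases eq_or_lt_of_le ht with h0 | ht0
  · rw [← h0, Real.zero_rpow (by linarith : q ≠ 0), Real.zero_rpow (by linarith : r ≠ 0)]
    linarith
  rcases le_or_gt 1 t with h1 | h1
  · have := Real.rpow_le_rpow_of_exponent_le h1 hqr
    linarith
  · have hlt : Real.log t < 0 := Real.log_neg ht0 h1
    have h2 : 1 - t ^ (r - q) ≤ (r - q) * (-Real.log t) := by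
      rw [Real.rpow_def_of_pos ht0, mul_comm (Real.log t) (r - q)]
      have hexp := Real.add_one_le_exp ((r - q) * Real.log t)
      linarith
    have h3 : t * (-Real.log t) ≤ 1 := by
      have hinv := Real.log_le_sub_one_of_pos (inv_pos.mpr ht0)
      rw [Real.log_inv] at hinv
      have ht' : t * t⁻¹ = 1 := mul_inv_cancel₀ ht0.ne'
      nlinarith
    have h4 : t ^ q ≤ t := by
      calc t ^ q ≤ t ^ (1:ℝ) := Real.rpow_le_rpow_of_exponent_ge ht0 h1.le hq
        _ = t := Real.rpow_one t
    have h5 : t ^ q * (1 - t ^ (r - q)) = t ^ q - t ^ r := by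
      rw [mul_sub, mul_one, ← Real.rpow_add ht0]
      ring_nf
    have h6 : t ^ (r - q) ≤ 1 := Real.rpow_le_one ht h1.le (by linarith)
    have h7 : (0:ℝ) ≤ t ^ q := Real.rpow_nonneg ht q
    nlinarith [mul_le_mul_of_nonneg_right h4 (by linarith : (0:ℝ) ≤ 1 - t ^ (r - q)),
      mul_le_mul_of_nonneg_left h3 (by linarith : (0:ℝ) ≤ r - q)]

set_option maxHeartbeats 2000000 in
/-- Lower semicontinuity of the variable-exponent modular along a sequence of
Hölder-continuous exponents converging uniformly, with respect to weak `L^α`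
convergence of the functions. -/
theorem statement16 {N : ℕ}
    (Ω : Set (EuclideanSpace ℝ (Fin N))) (hΩ_open : IsOpen Ω)
    (hΩ_bdd : Bornology.IsBounded Ω)
    (δ : ℝ) (hδ : δ ∈ Ioc (0 : ℝ) 1)
    (pk : ℕ → EuclideanSpace ℝ (Fin N) → ℝ) (p : EuclideanSpace ℝ (Fin N) → ℝ)
    (α β : ℝ) (hα : 1 < α) (hαβ : α ≤ β)
    (hpk_hold : ∀ k, ∃ C : ℝ, ∀ x ∈ closure Ω, ∀ y ∈ closure Ω,
      |pk k x - pk k y| ≤ C * ‖x - y‖ ^ δ)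
    (hp_hold : ∃ C : ℝ, ∀ x ∈ closure Ω, ∀ y ∈ closure Ω,
      |p x - p y| ≤ C * ‖x - y‖ ^ δ)
    (hunif : TendstoUniformlyOn pk p atTop (closure Ω))
    (hbnd : ∀ k, ∀ x ∈ Ω, α ≤ pk k x ∧ pk k x ≤ β)
    (f : ℕ → EuclideanSpace ℝ (Fin N) → ℝ) (flim : EuclideanSpace ℝ (Fin N) → ℝ)
    (hfk : ∀ k, MemLp (f k) (ENNReal.ofReal α) (volume.restrict Ω))
    (hflim : MemLp flim (ENNReal.ofReal α) (volume.restrict Ω))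
    (hlimsup : atTop.limsup
      (fun k => ∫⁻ x in Ω, ENNReal.ofReal (|f k x| ^ pk k x)) < ⊤)
    (hweak : ∀ g : EuclideanSpace ℝ (Fin N) → ℝ,
      MemLp g (ENNReal.ofReal (α / (α - 1))) (volume.restrict Ω) →
      Tendsto (fun k => ∫ x in Ω, f k x * g x) atTop (𝓝 (∫ x in Ω, flim x * g x))) :
    (∫⁻ x in Ω, ENNReal.ofReal (|flim x| ^ p x)) < ⊤ ∧
    (∫⁻ x in Ω, ENNReal.ofReal (|flim x| ^ p x)) ≤
      atTop.liminf (fun k => ∫⁻ x in Ω, ENNReal.ofReal (|f k x| ^ pk k x)) := by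
  obtain ⟨hδ0, hδ1⟩ := hδ
  have hΩmeas : MeasurableSet Ω := hΩ_open.measurableSet
  have hvolΩ : volume Ω < ⊤ := hΩ_bdd.measure_lt_top
  haveI hfinmeas : IsFiniteMeasure (volume.restrict Ω) :=
    ⟨by rwa [Measure.restrict_apply_univ]⟩
  set L := atTop.liminf (fun k => ∫⁻ x in Ω, ENNReal.ofReal (|f k x| ^ pk k x)) with hL
  -- bounds for `p` on `Ω`
  have hpΩ : ∀ x ∈ Ω, α ≤ p x ∧ p x ≤ β := by
    intro x hx
    have htend : Tendsto (fun k => pk k x) atTop (𝓝 (p x)) :=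
      hunif.tendsto_at (subset_closure hx)
    exact ⟨ge_of_tendsto' htend fun k => (hbnd k x hx).1,
      le_of_tendsto' htend fun k => (hbnd k x hx).2⟩
  -- continuity of `p` on `closure Ω`
  have hpcont : ContinuousOn p (closure Ω) := by
    obtain ⟨C, hC⟩ := hp_hold
    intro x hx
    rw [Metric.continuousWithinAt_iff]
    intro ε hε
    set C' : ℝ := max C 1 with hC'
    have hC'pos : (0:ℝ) < C' := lt_of_lt_of_le one_pos (le_max_right _ _)
    refine ⟨(ε / (2 * C')) ^ (1 / δ), Real.rpow_pos_of_pos (by positivity) _, ?_⟩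
    intro y hy hxy
    have h1 : dist y x ^ δ < ε / (2 * C') := by
      have h2 : dist y x ^ δ < ((ε / (2 * C')) ^ (1 / δ)) ^ δ :=
        Real.rpow_lt_rpow dist_nonneg hxy hδ0
      rwa [← Real.rpow_mul (by positivity), one_div_mul_cancel hδ0.ne', Real.rpow_one] at h2
    have hynorm : ‖y - x‖ = dist y x := by rw [dist_eq_norm]
    calc dist (p y) (p x) = |p y - p x| := Real.dist_eq _ _
      _ ≤ C * ‖y - x‖ ^ δ := hC y hy x hx
      _ ≤ C' * ‖y - x‖ ^ δ := by
          apply mul_le_mul_of_nonneg_right (le_max_left _ _)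
          exact Real.rpow_nonneg (norm_nonneg _) _
      _ < C' * (ε / (2 * C')) := by
          apply mul_lt_mul_of_pos_left _ hC'pos
          rwa [hynorm]
      _ = ε / 2 := by field_simp
      _ < ε := by linarith
  have hpmeas : AEMeasurable p (volume.restrict Ω) :=
    (hpcont.mono subset_closure).aemeasurable hΩmeas
  have hflim_meas : AEMeasurable flim (volume.restrict Ω) := hflim.1.aemeasurable
  -- key estimate, for every small ε
  have key : ∀ ε : ℝ, 0 < ε → ε ≤ (α - 1) / 2 →
      (∫⁻ x in Ω, ENNReal.ofReal (|flim x| ^ (p x - ε)))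
        ≤ L + ENNReal.ofReal (2 * ε) * volume Ω := by
    intro ε hε hε2
    set q : EuclideanSpace ℝ (Fin N) → ℝ := fun x => p x - ε with hq
    have hq1 : ∀ x ∈ Ω, 1 < q x := by
      intro x hx
      have := (hpΩ x hx).1
      simp only [hq]
      linarith
    have hqβ : ∀ x ∈ Ω, q x ≤ β := by
      intro x hx
      have := (hpΩ x hx).2
      simp only [hq]
      linarith
    have hqmeas : AEMeasurable q (volume.restrict Ω) := hpmeas.sub aemeasurable_const
    -- Part (ii): lower semicontinuity with the fixed exponent q
    have part2 : (∫⁻ x in Ω, ENNReal.ofReal (|flim x| ^ q x))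
        ≤ atTop.liminf (fun k => ∫⁻ x in Ω, ENNReal.ofReal (|f k x| ^ q x)) := by
      set T : ℕ → EuclideanSpace ℝ (Fin N) → ℝ :=
        fun M x => max (-(M:ℝ)) (min (M:ℝ) (flim x)) with hTdef
      have hMnn : ∀ M : ℕ, (0:ℝ) ≤ (M:ℝ) := fun M => Nat.cast_nonneg M
      have hTabs : ∀ M x, |T M x| ≤ (M:ℝ) := by
        intro M x
        rw [abs_le]
        refine ⟨le_max_left _ _, max_le (by linarith [hMnn M]) (min_le_left _ _)⟩
      have hTsign : ∀ M x, 0 ≤ T M x * (flim x - T M x) := by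
        intro M x
        rcases le_total (flim x) (-(M:ℝ)) with h | h
        · have hTx : T M x = -(M:ℝ) := max_eq_left (le_trans (min_le_right _ _) h)
          rw [hTx]
          nlinarith [hMnn M]
        · rcases le_total (flim x) (M:ℝ) with h2 | h2
          · have hTx : T M x = flim x := by
              simp only [hTdef]
              rw [min_eq_right h2, max_eq_right h]
            rw [hTx]
            simp
          · have hTx : T M x = (M:ℝ) := by
              simp only [hTdef]
              rw [min_eq_left h2]
              exact max_eq_right (by linarith [hMnn M])
            rw [hTx]
            nlinarith [hMnn M]
      have hTeq : ∀ x, ∀ᶠ M in atTop, T M x = flim x := by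
        intro x
        filter_upwards [eventually_ge_atTop ⌈|flim x|⌉₊] with M hM
        have habs : |flim x| ≤ (M:ℝ) := le_trans (Nat.le_ceil _) (Nat.cast_le.mpr hM)
        have h1 := abs_le.mp habs
        simp only [hTdef]
        rw [min_eq_right h1.2, max_eq_right h1.1]
      have hTmeas : ∀ M, AEMeasurable (T M) (volume.restrict Ω) := by
        intro M
        exact aemeasurable_const.max (aemeasurable_const.min hflim_meas)
      have hTabsmeas : ∀ M, AEMeasurable (fun x => |T M x|) (volume.restrict Ω) :=
        fun M => continuous_abs.measurable.comp_aemeasurable (hTmeas M)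
      -- integrability of the functions f k and flim
      have hfk_int : ∀ k, Integrable (f k) (volume.restrict Ω) :=
        fun k => (hfk k).integrable (ENNReal.one_le_ofReal.mpr hα.le)
      have hflim_int : Integrable flim (volume.restrict Ω) :=
        hflim.integrable (ENNReal.one_le_ofReal.mpr hα.le)
      -- main estimate for a fixed truncation level M
      have main : ∀ M : ℕ, (∫⁻ x in Ω, ENNReal.ofReal (|T M x| ^ q x))
          ≤ atTop.liminf (fun k => ∫⁻ x in Ω, ENNReal.ofReal (|f k x| ^ q x)) := by
        intro M
        set g : EuclideanSpace ℝ (Fin N) → ℝ :=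
          fun x => q x * |T M x| ^ (q x - 2) * T M x with hgdef
        set B : ℝ := β * ((M:ℝ) + 1) ^ β with hBdef
        have hβ0 : (0:ℝ) < β := by linarith
        have hMpow1 : (1:ℝ) ≤ ((M:ℝ) + 1) ^ β :=
          Real.one_le_rpow (by linarith [hMnn M]) hβ0.le
        have hTpow : ∀ x (e : ℝ), 0 ≤ e → e ≤ β → |T M x| ^ e ≤ ((M:ℝ) + 1) ^ β := by
          intro x e he heβ
          rcases le_total (|T M x|) 1 with h | h
          · exact le_trans (Real.rpow_le_one (abs_nonneg _) h he) hMpow1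
          · calc |T M x| ^ e ≤ ((M:ℝ) + 1) ^ e :=
                Real.rpow_le_rpow (abs_nonneg _) (le_trans (hTabs M x) (by linarith)) he
              _ ≤ ((M:ℝ) + 1) ^ β :=
                Real.rpow_le_rpow_of_exponent_le (by linarith [hMnn M]) heβ
        have hgabs : ∀ x ∈ Ω, |g x| = q x * |T M x| ^ (q x - 1) := by
          intro x hx
          have hq1x := hq1 x hx
          rcases eq_or_ne (T M x) 0 with h0 | h0
          · simp only [hgdef, h0, mul_zero, abs_zero]
            rw [Real.zero_rpow (by linarith : q x - 1 ≠ 0), mul_zero]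
          · have habs0 : 0 < |T M x| := abs_pos.mpr h0
            have h2 : |T M x| ^ (q x - 2) * |T M x| = |T M x| ^ (q x - 1) := by
              have h := Real.rpow_add habs0 (q x - 2) 1
              rw [Real.rpow_one] at h
              rw [← h]
              congr 1
              ring
            simp only [hgdef]
            rw [abs_mul, abs_mul, abs_of_nonneg (by linarith : (0:ℝ) ≤ q x),
              abs_of_nonneg (Real.rpow_nonneg (abs_nonneg _) _), mul_assoc, h2]
        have hgbound : ∀ x ∈ Ω, |g x| ≤ B := by
          intro x hx
          have hq1x := hq1 x hx
          have hqβx := hqβ x hx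
          rw [hgabs x hx, hBdef]
          have hTp : |T M x| ^ (q x - 1) ≤ ((M:ℝ) + 1) ^ β :=
            hTpow x (q x - 1) (by linarith) (by linarith)
          have hqnn : (0:ℝ) ≤ q x := by linarith
          exact mul_le_mul hqβx hTp (Real.rpow_nonneg (abs_nonneg _) _) hβ0.le
        have hgmeas : AEMeasurable g (volume.restrict Ω) :=
          (hqmeas.mul ((hTabsmeas M).pow (hqmeas.sub aemeasurable_const))).mul (hTmeas M)
        have hgsm : AEStronglyMeasurable g (volume.restrict Ω) :=
          hgmeas.aestronglyMeasurable
        have hgbound_ae : ∀ᵐ x ∂(volume.restrict Ω), ‖g x‖ ≤ B := by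
          filter_upwards [ae_restrict_mem hΩmeas] with x hx
          simpa [Real.norm_eq_abs] using hgbound x hx
        have hgmem : MemLp g (ENNReal.ofReal (α / (α - 1))) (volume.restrict Ω) :=
          MemLp.of_bound hgsm B hgbound_ae
        -- the affine part
        set h0 : EuclideanSpace ℝ (Fin N) → ℝ :=
          fun x => |T M x| ^ q x - g x * T M x with hh0def
        have hh0meas : AEMeasurable h0 (volume.restrict Ω) :=
          ((hTabsmeas M).pow hqmeas).sub (hgmeas.mul (hTmeas M))
        have hh0bound : ∀ᵐ x ∂(volume.restrict Ω),
            ‖h0 x‖ ≤ ((M:ℝ) + 1) ^ β + B * (M:ℝ) := by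
          filter_upwards [ae_restrict_mem hΩmeas] with x hx
          have hq1x := hq1 x hx
          have h1 : |T M x| ^ q x ≤ ((M:ℝ) + 1) ^ β :=
            hTpow x (q x) (by linarith) (hqβ x hx)
          have h2 : |g x * T M x| ≤ B * (M:ℝ) := by
            rw [abs_mul]
            exact mul_le_mul (hgbound x hx) (hTabs M x) (abs_nonneg _)
              (le_trans (abs_nonneg _) (hgbound x hx))
          rw [Real.norm_eq_abs]
          calc |h0 x| ≤ |(|T M x| ^ q x)| + |g x * T M x| := abs_sub _ _
            _ ≤ ((M:ℝ) + 1) ^ β + B * (M:ℝ) := by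
                rw [abs_of_nonneg (Real.rpow_nonneg (abs_nonneg _) _)]
                exact add_le_add h1 h2
        have hh0int : Integrable h0 (volume.restrict Ω) :=
          memLp_one_iff_integrable.mp
            (MemLp.of_bound hh0meas.aestronglyMeasurable _ hh0bound)
        have hTq_int : Integrable (fun x => |T M x| ^ q x) (volume.restrict Ω) := by
          refine memLp_one_iff_integrable.mp
            (MemLp.of_bound ((hTabsmeas M).pow hqmeas).aestronglyMeasurable
              (((M:ℝ) + 1) ^ β) ?_)
          filter_upwards [ae_restrict_mem hΩmeas] with x hx
          have hq1x := hq1 x hx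
          rw [Real.norm_eq_abs, abs_of_nonneg (Real.rpow_nonneg (abs_nonneg _) _)]
          exact hTpow x (q x) (by linarith) (hqβ x hx)
        have hgfk_int : ∀ k, Integrable (fun x => g x * f k x) (volume.restrict Ω) :=
          fun k => (hfk_int k).bdd_mul hgsm hgbound_ae
        have hgfl_int : Integrable (fun x => g x * flim x) (volume.restrict Ω) :=
          hflim_int.bdd_mul hgsm hgbound_ae
        -- pointwise convexity inequality and the per-k bound
        have step : ∀ k, ENNReal.ofReal ((∫ x in Ω, h0 x) + ∫ x in Ω, g x * f k x)
            ≤ ∫⁻ x in Ω, ENNReal.ofReal (|f k x| ^ q x) := by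
          intro k
          have hki : Integrable (fun x => h0 x + g x * f k x) (volume.restrict Ω) :=
            hh0int.add (hgfk_int k)
          rw [← integral_add hh0int (hgfk_int k)]
          refine (aux_ofReal_integral_le hki).trans (lintegral_mono_ae ?_)
          filter_upwards [ae_restrict_mem hΩmeas] with x hx
          apply ENNReal.ofReal_le_ofReal
          have hconv := aux_convex (a := f k x) (b := T M x) (hq1 x hx)
          have heq : h0 x + g x * f k x
              = |T M x| ^ q x + q x * |T M x| ^ (q x - 2) * T M x * (f k x - T M x) := by
            simp only [hh0def, hgdef]
            ring
          rw [heq]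
          exact hconv
        -- passage to the limit in k
        have hcommk : ∀ k, (∫ x in Ω, g x * f k x) = ∫ x in Ω, f k x * g x :=
          fun k => integral_congr_ae (Eventually.of_forall fun x => mul_comm _ _)
        have hcomml : (∫ x in Ω, g x * flim x) = ∫ x in Ω, flim x * g x :=
          integral_congr_ae (Eventually.of_forall fun x => mul_comm _ _)
        have htend : Tendsto (fun k => (∫ x in Ω, h0 x) + ∫ x in Ω, g x * f k x) atTop
            (𝓝 ((∫ x in Ω, h0 x) + ∫ x in Ω, g x * flim x)) := by
          apply tendsto_const_nhds.add
          have hw := hweak g hgmem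
          rw [hcomml]
          simpa only [hcommk] using hw
        have hlim1 : ENNReal.ofReal ((∫ x in Ω, h0 x) + ∫ x in Ω, g x * flim x)
            ≤ atTop.liminf (fun k => ∫⁻ x in Ω, ENNReal.ofReal (|f k x| ^ q x)) := by
          have hli := ((ENNReal.continuous_ofReal.tendsto _).comp htend).liminf_eq
          rw [← hli]
          exact liminf_le_liminf (Eventually.of_forall step)
        have hIlow : ENNReal.ofReal (∫ x in Ω, |T M x| ^ q x)
            ≤ ENNReal.ofReal ((∫ x in Ω, h0 x) + ∫ x in Ω, g x * flim x) := by
          apply ENNReal.ofReal_le_ofReal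
          rw [← integral_add hh0int hgfl_int]
          refine integral_mono_ae hTq_int (hh0int.add hgfl_int) ?_
          filter_upwards [ae_restrict_mem hΩmeas] with x hx
          have hq1x := hq1 x hx
          have hnn : 0 ≤ g x * (flim x - T M x) := by
            have hrw : g x * (flim x - T M x)
                = (q x * |T M x| ^ (q x - 2)) * (T M x * (flim x - T M x)) := by
              simp only [hgdef]
              ring
            rw [hrw]
            exact mul_nonneg (mul_nonneg (by linarith)
              (Real.rpow_nonneg (abs_nonneg _) _)) (hTsign M x)
          have : h0 x + g x * flim x = |T M x| ^ q x + g x * (flim x - T M x) := by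
            simp only [hh0def]
            ring
          rw [this]
          linarith
        have heqTq : ENNReal.ofReal (∫ x in Ω, |T M x| ^ q x)
            = ∫⁻ x in Ω, ENNReal.ofReal (|T M x| ^ q x) :=
          ofReal_integral_eq_lintegral_ofReal hTq_int
            (Eventually.of_forall fun x => Real.rpow_nonneg (abs_nonneg _) _)
        rw [← heqTq]
        exact hIlow.trans hlim1
      -- Fatou in M
      have hcong : (∫⁻ x in Ω, ENNReal.ofReal (|flim x| ^ q x))
          = ∫⁻ x in Ω, atTop.liminf (fun M => ENNReal.ofReal (|T M x| ^ q x)) := by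
        refine lintegral_congr_ae (Eventually.of_forall fun x => ?_)
        have htendM : Tendsto (fun M => ENNReal.ofReal (|T M x| ^ q x)) atTop
            (𝓝 (ENNReal.ofReal (|flim x| ^ q x))) := by
          refine Tendsto.congr' ?_ tendsto_const_nhds
          filter_upwards [hTeq x] with M hM
          rw [hM]
        exact htendM.liminf_eq.symm
      rw [hcong]
      refine (lintegral_liminf_le' fun M =>
        ((hTabsmeas M).pow hqmeas).ennreal_ofReal).trans ?_
      calc atTop.liminf (fun M => ∫⁻ x in Ω, ENNReal.ofReal (|T M x| ^ q x))
          ≤ atTop.liminf (fun _ : ℕ =>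
              atTop.liminf fun k => ∫⁻ x in Ω, ENNReal.ofReal (|f k x| ^ q x)) :=
            liminf_le_liminf (Eventually.of_forall main)
        _ = _ := liminf_const _
    -- Part (i): comparison of modulars with nearby exponents
    have part1 : atTop.liminf (fun k => ∫⁻ x in Ω, ENNReal.ofReal (|f k x| ^ q x))
        ≤ L + ENNReal.ofReal (2 * ε) * volume Ω := by
      have hev : ∀ᶠ k in atTop, (∫⁻ x in Ω, ENNReal.ofReal (|f k x| ^ q x))
          ≤ (∫⁻ x in Ω, ENNReal.ofReal (|f k x| ^ pk k x))
            + ENNReal.ofReal (2 * ε) * volume Ω := by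
        filter_upwards [Metric.tendstoUniformlyOn_iff.mp hunif ε hε] with k hk
        have hptwise : ∀ᵐ x ∂(volume.restrict Ω),
            ENNReal.ofReal (|f k x| ^ q x)
              ≤ ENNReal.ofReal (|f k x| ^ pk k x) + ENNReal.ofReal (2 * ε) := by
          filter_upwards [ae_restrict_mem hΩmeas] with x hx
          have hd := hk x (subset_closure hx)
          rw [Real.dist_eq] at hd
          have habs := abs_lt.mp hd
          have hq1x : 1 ≤ q x := (hq1 x hx).le
          have hqr : q x ≤ pk k x := by
            simp only [hq]
            linarith [habs.1, habs.2]
          have hgap := aux_gap (abs_nonneg (f k x)) hq1x hqr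
          calc ENNReal.ofReal (|f k x| ^ q x)
              ≤ ENNReal.ofReal (|f k x| ^ pk k x + 2 * ε) := by
                apply ENNReal.ofReal_le_ofReal
                have hd2 : pk k x - q x ≤ 2 * ε := by
                  simp only [hq]
                  linarith [habs.1, habs.2]
                linarith
            _ ≤ _ := ENNReal.ofReal_add_le
        calc (∫⁻ x in Ω, ENNReal.ofReal (|f k x| ^ q x))
            ≤ ∫⁻ x in Ω, (ENNReal.ofReal (|f k x| ^ pk k x) + ENNReal.ofReal (2 * ε)) :=
              lintegral_mono_ae hptwise
          _ = (∫⁻ x in Ω, ENNReal.ofReal (|f k x| ^ pk k x))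
              + ENNReal.ofReal (2 * ε) * volume Ω := by
              rw [lintegral_add_right _ measurable_const, lintegral_const,
                Measure.restrict_apply_univ]
      refine (liminf_le_liminf hev).trans ?_
      have hmono : Monotone (fun z : ℝ≥0∞ => z + ENNReal.ofReal (2 * ε) * volume Ω) :=
        fun a b hab => add_le_add_left hab _
      have hcont : ContinuousAt (fun z : ℝ≥0∞ => z + ENNReal.ofReal (2 * ε) * volume Ω)
          (atTop.liminf fun k => ∫⁻ x in Ω, ENNReal.ofReal (|f k x| ^ pk k x)) :=
        (continuous_add_right _).continuousAt
      have heq := hmono.map_liminf_of_continuousAt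
        (fun k => ∫⁻ x in Ω, ENNReal.ofReal (|f k x| ^ pk k x)) hcont
      rw [← hL] at heq
      exact le_of_eq (by simpa [Function.comp_def] using heq.symm)
    exact part2.trans part1
  -- conclusion
  have main : (∫⁻ x in Ω, ENNReal.ofReal (|flim x| ^ p x)) ≤ L := by
    set εs : ℕ → ℝ := fun n => (α - 1) / 2 * (1 / ((n:ℝ) + 1)) with hεs
    have hεs_pos : ∀ n, 0 < εs n := by
      intro n
      simp only [hεs]
      apply mul_pos (by linarith)
      positivity
    have hεs_le : ∀ n, εs n ≤ (α - 1) / 2 := by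
      intro n
      simp only [hεs]
      have h1 : 1 / ((n:ℝ) + 1) ≤ 1 := by
        rw [div_le_one (by positivity)]
        simp [Nat.cast_nonneg]
      nlinarith [h1]
    have hεs_tend : Tendsto εs atTop (𝓝 0) := by
      have := tendsto_one_div_add_atTop_nhds_zero_nat.const_mul ((α - 1) / 2)
      simpa [hεs] using this
    have hkey : ∀ n, (∫⁻ x in Ω, ENNReal.ofReal (|flim x| ^ (p x - εs n)))
        ≤ L + ENNReal.ofReal (2 * εs n) * volume Ω :=
      fun n => key _ (hεs_pos n) (hεs_le n)
    have hfat : (∫⁻ x in Ω, ENNReal.ofReal (|flim x| ^ p x))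
        ≤ atTop.liminf (fun n => ∫⁻ x in Ω, ENNReal.ofReal (|flim x| ^ (p x - εs n))) := by
      have hcong : (∫⁻ x in Ω, ENNReal.ofReal (|flim x| ^ p x))
          = ∫⁻ x in Ω, atTop.liminf (fun n => ENNReal.ofReal (|flim x| ^ (p x - εs n))) := by
        refine lintegral_congr_ae ?_
        filter_upwards [ae_restrict_mem hΩmeas] with x hx
        have hpx : 0 < p x := lt_of_lt_of_le (by linarith) (hpΩ x hx).1
        have hexp : Tendsto (fun n => p x - εs n) atTop (𝓝 (p x)) := by
          simpa using tendsto_const_nhds.sub hεs_tend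
        have hpair : Tendsto (fun n => ((|flim x|, p x - εs n) : ℝ × ℝ)) atTop
            (𝓝 (|flim x|, p x)) := tendsto_const_nhds.prodMk_nhds hexp
        have hc := Real.continuousAt_rpow (|flim x|, p x) (Or.inr hpx)
        have hrpow : Tendsto (fun n => |flim x| ^ (p x - εs n)) atTop
            (𝓝 (|flim x| ^ p x)) := hc.tendsto.comp hpair
        exact (((ENNReal.continuous_ofReal.tendsto _).comp hrpow).liminf_eq).symm
      rw [hcong]
      exact lintegral_liminf_le' fun n =>
        ((continuous_abs.measurable.comp_aemeasurable hflim_meas).pow (hpmeas.sub aemeasurable_const)).ennreal_ofReal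
    have hR : Tendsto (fun n => L + ENNReal.ofReal (2 * εs n) * volume Ω) atTop (𝓝 L) := by
      have h1 : Tendsto (fun n => ENNReal.ofReal (2 * εs n)) atTop (𝓝 0) := by
        have h0 : Tendsto (fun n => 2 * εs n) atTop (𝓝 (2 * 0)) := hεs_tend.const_mul 2
        rw [mul_zero] at h0
        rw [show (0:ℝ≥0∞) = ENNReal.ofReal 0 by simp]
        exact ENNReal.tendsto_ofReal h0
      have h2 : Tendsto (fun n => ENNReal.ofReal (2 * εs n) * volume Ω) atTop (𝓝 0) := by
        have := ENNReal.Tendsto.mul_const h1 (Or.inr hvolΩ.ne)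
        simpa using this
      have := (tendsto_const_nhds (x := L) (f := atTop)).add h2
      simpa using this
    calc (∫⁻ x in Ω, ENNReal.ofReal (|flim x| ^ p x))
        ≤ atTop.liminf (fun n => ∫⁻ x in Ω, ENNReal.ofReal (|flim x| ^ (p x - εs n))) := hfat
      _ ≤ atTop.liminf (fun n => L + ENNReal.ofReal (2 * εs n) * volume Ω) :=
          liminf_le_liminf (Eventually.of_forall hkey)
      _ = L := hR.liminf_eq
  exact ⟨lt_of_le_of_lt (main.trans liminf_le_limsup) hlimsup, main⟩
end
end

section
/- Let Ω ⊂ ℝ^N be a bounded open set, δ ∈ (0,1], and let p_k, p ∈ C^{0,δ}(cl Ω) for k = 1, 2, … with p_k → p uniformly on cl Ω and 1 < α ≤ p_k(x) ≤ β < ∞ for all k and all x ∈ Ω. Let {f_k} be a sequence of measurable functions with limsup_{k→∞} ∫_Ω |f_k(x)|^{p_k(x)} dx < ∞, and suppose f_k converges weakly in L^α(Ω) to f, i.e., ∫_Ω f_k g dx → ∫_Ω f g dx for every g ∈ L^{α/(α−1)}(Ω). Then liminf_{k→∞} ∫_Ω (1/p_k(x)) |f_k(x)|^{p_k(x)} dx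 ≥ ∫_Ω (1/p(x)) |f(x)|^{p(x)} dx. -/
open MeasureTheory Real Set Filter
open scoped ENNReal Topology

noncomputable section

lemma measurable_realSign : Measurable Real.sign := by
  have h : Real.sign = fun r : ℝ => if r < 0 then (-1 : ℝ) else if 0 < r then 1 else 0 := rfl
  rw [h]
  exact Measurable.ite measurableSet_Iio measurable_const
    (Measurable.ite measurableSet_Ioi measurable_const measurable_const)

lemma continuousOn_of_holder {E : Type*} [NormedAddCommGroup E] {s : Set E}
    {g : E → ℝ} {C δ : ℝ} (hδ : 0 < δ)
    (h : ∀ x ∈ s, ∀ y ∈ s, |g x - g y| ≤ C * ‖x - y‖ ^ δ) : ContinuousOn g s := by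
  intro x hx
  rw [ContinuousWithinAt, tendsto_iff_dist_tendsto_zero]
  have h1 : Tendsto (fun y : E => ‖y - x‖) (𝓝[s] x) (𝓝 0) := by
    have h0 : Tendsto (fun y : E => ‖y - x‖) (𝓝 x) (𝓝 ‖x - x‖) :=
      ((continuous_id.sub continuous_const).norm).tendsto x
    simpa using h0.mono_left nhdsWithin_le_nhds
  have h2 : Tendsto (fun t : ℝ => C * t ^ δ) (𝓝 0) (𝓝 (C * (0 : ℝ) ^ δ)) :=
    tendsto_const_nhds.mul ((Real.continuousAt_rpow_const 0 δ (Or.inr hδ.le)).tendsto)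
  rw [Real.zero_rpow hδ.ne', mul_zero] at h2
  refine squeeze_zero' (.of_forall fun y => dist_nonneg) ?_ (h2.comp h1)
  filter_upwards [self_mem_nhdsWithin] with y hy
  rw [Real.dist_eq]
  exact h y hy x hx

/-- Weighted lower semicontinuity of the variable-exponent modular (with weight
`1/p_k(x)`) along a sequence of Hölder-continuous exponents converging uniformly,
with respect to weak `L^α` convergence of the functions. -/
theorem statement17 {N : ℕ}
    (Ω : Set (EuclideanSpace ℝ (Fin N))) (hΩ_open : IsOpen Ω)
    (hΩ_bdd : Bornology.IsBounded Ω)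
    (δ : ℝ) (hδ : δ ∈ Ioc (0 : ℝ) 1)
    (pk : ℕ → EuclideanSpace ℝ (Fin N) → ℝ) (p : EuclideanSpace ℝ (Fin N) → ℝ)
    (α β : ℝ) (hα : 1 < α) (hαβ : α ≤ β)
    (hpk_hold : ∀ k, ∃ C : ℝ, ∀ x ∈ closure Ω, ∀ y ∈ closure Ω,
      |pk k x - pk k y| ≤ C * ‖x - y‖ ^ δ)
    (hp_hold : ∃ C : ℝ, ∀ x ∈ closure Ω, ∀ y ∈ closure Ω,
      |p x - p y| ≤ C * ‖x - y‖ ^ δ)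
    (hunif : TendstoUniformlyOn pk p atTop (closure Ω))
    (hbnd : ∀ k, ∀ x ∈ Ω, α ≤ pk k x ∧ pk k x ≤ β)
    (f : ℕ → EuclideanSpace ℝ (Fin N) → ℝ) (flim : EuclideanSpace ℝ (Fin N) → ℝ)
    (hfk : ∀ k, MemLp (f k) (ENNReal.ofReal α) (volume.restrict Ω))
    (hflim : MemLp flim (ENNReal.ofReal α) (volume.restrict Ω))
    (hlimsup : atTop.limsup
      (fun k => ∫⁻ x in Ω, ENNReal.ofReal (|f k x| ^ pk k x)) < ⊤)
    (hweak : ∀ g : EuclideanSpace ℝ (Fin N) → ℝ,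
      MemLp g (ENNReal.ofReal (α / (α - 1))) (volume.restrict Ω) →
      Tendsto (fun k => ∫ x in Ω, f k x * g x) atTop (𝓝 (∫ x in Ω, flim x * g x))) :
    (∫⁻ x in Ω, ENNReal.ofReal ((1 / p x) * |flim x| ^ p x)) ≤
      atTop.liminf
        (fun k => ∫⁻ x in Ω, ENNReal.ofReal ((1 / pk k x) * |f k x| ^ pk k x)) := by
  obtain ⟨hδ0, hδ1⟩ := hδ
  have hΩm : MeasurableSet Ω := hΩ_open.measurableSet
  set μ : Measure (EuclideanSpace ℝ (Fin N)) := volume.restrict Ω with hμdef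
  haveI : IsFiniteMeasure μ :=
    ⟨by rw [hμdef, Measure.restrict_apply_univ]; exact hΩ_bdd.measure_lt_top⟩
  have hα0 : (0 : ℝ) < α := lt_trans one_pos hα
  have hα1 : (0 : ℝ) < α - 1 := sub_pos.2 hα
  have hβ1 : (1 : ℝ) < β := lt_of_lt_of_le hα hαβ
  have hone_le : (1 : ℝ≥0∞) ≤ ENNReal.ofReal α := ENNReal.one_le_ofReal.2 hα.le
  have hfint : ∀ k, Integrable (f k) μ := fun k => (hfk k).integrable hone_le
  have hflimint : Integrable flim μ := hflim.integrable hone_le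
  have hfmeas : ∀ k, AEMeasurable (f k) μ := fun k => (hfk k).aestronglyMeasurable.aemeasurable
  have hflimmeas : AEMeasurable flim μ := hflim.aestronglyMeasurable.aemeasurable
  -- measurability of the exponents
  have hpmeas : AEMeasurable p μ := by
    obtain ⟨C, hC⟩ := hp_hold
    exact ((continuousOn_of_holder hδ0 hC).mono subset_closure).aemeasurable hΩm
  have hpkmeas : ∀ k, AEMeasurable (pk k) μ := by
    intro k
    obtain ⟨C, hC⟩ := hpk_hold k
    exact ((continuousOn_of_holder hδ0 hC).mono subset_closure).aemeasurable hΩm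
  -- pointwise convergence of the exponents
  have hpt : ∀ x ∈ closure Ω, Tendsto (fun k => pk k x) atTop (𝓝 (p x)) :=
    fun x hx => hunif.tendsto_at hx
  have hpΩ : ∀ x ∈ Ω, α ≤ p x ∧ p x ≤ β := by
    intro x hx
    have h := hpt x (subset_closure hx)
    exact ⟨ge_of_tendsto h (.of_forall fun k => (hbnd k x hx).1),
      le_of_tendsto h (.of_forall fun k => (hbnd k x hx).2)⟩
  -- clamped exponents
  set P : EuclideanSpace ℝ (Fin N) → ℝ := fun x => max α (min β (p x)) with hPdef
  set Pk : ℕ → EuclideanSpace ℝ (Fin N) → ℝ := fun k x => max α (min β (pk k x)) with hPkdef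
  have hPa : ∀ x, α ≤ P x := fun x => le_max_left _ _
  have hPb : ∀ x, P x ≤ β := fun x => max_le hαβ (min_le_left _ _)
  have hP1 : ∀ x, 1 < P x := fun x => lt_of_lt_of_le hα (hPa x)
  have hPka : ∀ k x, α ≤ Pk k x := fun k x => le_max_left _ _
  have hPkb : ∀ k x, Pk k x ≤ β := fun k x => max_le hαβ (min_le_left _ _)
  have hPk1 : ∀ k x, 1 < Pk k x := fun k x => lt_of_lt_of_le hα (hPka k x)
  have hPeq : ∀ x ∈ Ω, P x = p x := by
    intro x hx
    rw [hPdef]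
    simp only [min_eq_right (hpΩ x hx).2, max_eq_right (hpΩ x hx).1]
  have hPkeq : ∀ k, ∀ x ∈ Ω, Pk k x = pk k x := by
    intro k x hx
    rw [hPkdef]
    simp only [min_eq_right (hbnd k x hx).2, max_eq_right (hbnd k x hx).1]
  have hPmeas : AEMeasurable P μ := aemeasurable_const.max (aemeasurable_const.min hpmeas)
  have hPkmeas : ∀ k, AEMeasurable (Pk k) μ :=
    fun k => aemeasurable_const.max (aemeasurable_const.min (hpkmeas k))
  -- conjugate exponents
  set Q : EuclideanSpace ℝ (Fin N) → ℝ := fun x => P x / (P x - 1) with hQdef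
  set Qk : ℕ → EuclideanSpace ℝ (Fin N) → ℝ := fun k x => Pk k x / (Pk k x - 1) with hQkdef
  have hconj : ∀ x, (P x).HolderConjugate (Q x) :=
    fun x => (Real.holderConjugate_iff_eq_conjExponent (hP1 x)).2 rfl
  have hconjk : ∀ k x, (Pk k x).HolderConjugate (Qk k x) :=
    fun k x => (Real.holderConjugate_iff_eq_conjExponent (hPk1 k x)).2 rfl
  have hQ1 : ∀ x, 1 < Q x := fun x => (hconj x).symm.lt
  have hQk1 : ∀ k x, 1 < Qk k x := fun k x => (hconjk k x).symm.lt
  have hQub : ∀ x, Q x ≤ α / (α - 1) := by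
    intro x
    rw [hQdef, div_le_div_iff₀ (sub_pos.2 (hP1 x)) hα1]
    nlinarith [hPa x]
  have hQkub : ∀ k x, Qk k x ≤ α / (α - 1) := by
    intro k x
    rw [hQkdef, div_le_div_iff₀ (sub_pos.2 (hPk1 k x)) hα1]
    nlinarith [hPka k x]
  have hQkmeas : ∀ k, AEMeasurable (Qk k) μ :=
    fun k => (hPkmeas k).div ((hPkmeas k).sub aemeasurable_const)
  have hQmeas : AEMeasurable Q μ := hPmeas.div (hPmeas.sub aemeasurable_const)
  -- eventual finiteness of the unweighted modulars
  have hev : ∀ᶠ k in atTop, (∫⁻ x, ENNReal.ofReal (|f k x| ^ pk k x) ∂μ) < ⊤ :=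
    eventually_lt_of_limsup_lt hlimsup
  -- main claim for each truncation level n
  have key : ∀ n : ℕ,
      (∫⁻ x, ENNReal.ofReal ((1 / P x) * (min |flim x| ((n : ℝ) + 1)) ^ P x) ∂μ) ≤
        atTop.liminf (fun k => ∫⁻ x, ENNReal.ofReal ((1 / pk k x) * |f k x| ^ pk k x) ∂μ) := by
    intro n
    set m : EuclideanSpace ℝ (Fin N) → ℝ := fun x => min |flim x| ((n : ℝ) + 1) with hmdef
    set g : EuclideanSpace ℝ (Fin N) → ℝ :=
      fun x => Real.sign (flim x) * m x ^ (P x - 1) with hgdef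
    have hn1 : (1 : ℝ) ≤ (n : ℝ) + 1 := by
      have : (0:ℝ) ≤ (n:ℝ) := Nat.cast_nonneg n
      linarith
    have hm0 : ∀ x, 0 ≤ m x := fun x => le_min (abs_nonneg _) (by positivity)
    have hmle : ∀ x, m x ≤ (n : ℝ) + 1 := fun x => min_le_right _ _
    have hmflim : ∀ x, m x ≤ |flim x| := fun x => min_le_left _ _
    have hgabs : ∀ x, |g x| = m x ^ (P x - 1) := by
      intro x
      rw [hgdef]
      simp only
      rw [abs_mul, abs_of_nonneg (Real.rpow_nonneg (hm0 x) _)]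
      rcases eq_or_ne (flim x) 0 with h0 | h0
      · have hmx : m x = 0 := by
          rw [hmdef]; simp only [h0, abs_zero]
          exact min_eq_left (by positivity)
        rw [hmx, Real.zero_rpow (ne_of_gt (sub_pos.2 (hP1 x)))]
        simp
      · rcases Real.sign_apply_eq_of_ne_zero _ h0 with hs | hs <;> rw [hs] <;> simp
    have hflim_mul_g : ∀ x, flim x * g x = |flim x| * m x ^ (P x - 1) := by
      intro x
      rw [hgdef]
      simp only
      rw [show flim x * (Real.sign (flim x) * m x ^ (P x - 1)) =
        (flim x * Real.sign (flim x)) * m x ^ (P x - 1) by ring]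
      congr 1
      rcases lt_trichotomy (flim x) 0 with h | h | h
      · rw [Real.sign_of_neg h, abs_of_neg h]; ring
      · simp [h]
      · rw [Real.sign_of_pos h, abs_of_pos h]; ring
    set M : ℝ := ((n : ℝ) + 1) ^ (β - 1) with hMdef
    have hM1 : (1 : ℝ) ≤ M := by
      calc (1 : ℝ) = (1 : ℝ) ^ (β - 1) := (Real.one_rpow _).symm
        _ ≤ M := Real.rpow_le_rpow zero_le_one hn1 (by linarith)
    have hgbdd : ∀ x, ‖g x‖ ≤ M := by
      intro x
      rw [Real.norm_eq_abs, hgabs x]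
      calc m x ^ (P x - 1) ≤ ((n : ℝ) + 1) ^ (P x - 1) :=
            Real.rpow_le_rpow (hm0 x) (hmle x) (by linarith [hP1 x])
        _ ≤ M := Real.rpow_le_rpow_of_exponent_le hn1 (by linarith [hPb x])
    have hmmeas : AEMeasurable m μ :=
      (measurable_abs.comp_aemeasurable hflimmeas).min aemeasurable_const
    have hgmeas : AEMeasurable g μ :=
      (measurable_realSign.comp_aemeasurable hflimmeas).mul
        (hmmeas.pow (hPmeas.sub aemeasurable_const))
    have hgLp : MemLp g (ENNReal.ofReal (α / (α - 1))) μ :=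
      MemLp.of_bound hgmeas.aestronglyMeasurable M (.of_forall hgbdd)
    have hweakg := hweak g hgLp
    -- the conjugate-modular terms
    set v : ℕ → EuclideanSpace ℝ (Fin N) → ℝ :=
      fun k x => (1 / Qk k x) * |g x| ^ Qk k x with hvdef
    set V : EuclideanSpace ℝ (Fin N) → ℝ := fun x => (1 / Q x) * |g x| ^ Q x with hVdef
    set MQ : ℝ := M ^ (α / (α - 1)) with hMQdef
    have hvnn : ∀ k x, 0 ≤ v k x := fun k x =>
      mul_nonneg (one_div_pos.2 (lt_trans one_pos (hQk1 k x))).le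
        (Real.rpow_nonneg (abs_nonneg _) _)
    have hVnn : ∀ x, 0 ≤ V x := fun x =>
      mul_nonneg (one_div_pos.2 (lt_trans one_pos (hQ1 x))).le
        (Real.rpow_nonneg (abs_nonneg _) _)
    have hvbd : ∀ k x, |v k x| ≤ MQ := by
      intro k x
      rw [abs_of_nonneg (hvnn k x), hvdef]
      simp only
      have h1 : 1 / Qk k x ≤ 1 := by
        rw [div_le_one (lt_trans one_pos (hQk1 k x))]; exact (hQk1 k x).le
      have h2 : |g x| ^ Qk k x ≤ MQ := by
        calc |g x| ^ Qk k x ≤ M ^ Qk k x :=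
              Real.rpow_le_rpow (abs_nonneg _) (by simpa using hgbdd x)
                (le_of_lt (lt_trans one_pos (hQk1 k x)))
          _ ≤ MQ := Real.rpow_le_rpow_of_exponent_le hM1 (hQkub k x)
      calc (1 / Qk k x) * |g x| ^ Qk k x ≤ 1 * MQ :=
            mul_le_mul h1 h2 (Real.rpow_nonneg (abs_nonneg _) _) zero_le_one
        _ = MQ := one_mul _
    have hVbd : ∀ x, |V x| ≤ MQ := by
      intro x
      rw [abs_of_nonneg (hVnn x), hVdef]
      simp only
      have h1 : 1 / Q x ≤ 1 := by
        rw [div_le_one (lt_trans one_pos (hQ1 x))]; exact (hQ1 x).le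
      have h2 : |g x| ^ Q x ≤ MQ := by
        calc |g x| ^ Q x ≤ M ^ Q x :=
              Real.rpow_le_rpow (abs_nonneg _) (by simpa using hgbdd x)
                (le_of_lt (lt_trans one_pos (hQ1 x)))
          _ ≤ MQ := Real.rpow_le_rpow_of_exponent_le hM1 (hQub x)
      calc (1 / Q x) * |g x| ^ Q x ≤ 1 * MQ :=
            mul_le_mul h1 h2 (Real.rpow_nonneg (abs_nonneg _) _) zero_le_one
        _ = MQ := one_mul _
    have hvmeas : ∀ k, AEStronglyMeasurable (v k) μ := fun k =>
      ((aemeasurable_const.div (hQkmeas k)).mul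
        ((measurable_abs.comp_aemeasurable hgmeas).pow (hQkmeas k))).aestronglyMeasurable
    have hVmeas : AEStronglyMeasurable V μ :=
      ((aemeasurable_const.div hQmeas).mul
        ((measurable_abs.comp_aemeasurable hgmeas).pow hQmeas)).aestronglyMeasurable
    have hvint : ∀ k, Integrable (v k) μ := fun k =>
      (integrable_const MQ).mono' (hvmeas k)
        (.of_forall fun x => by rw [Real.norm_eq_abs]; exact hvbd k x)
    have hVint : Integrable V μ :=
      (integrable_const MQ).mono' hVmeas
        (.of_forall fun x => by rw [Real.norm_eq_abs]; exact hVbd x)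
    -- convergence of the conjugate-modular terms
    have hc_tendsto : Tendsto (fun k => ∫ x, v k x ∂μ) atTop (𝓝 (∫ x, V x ∂μ)) := by
      refine tendsto_integral_of_dominated_convergence (fun _ => MQ) hvmeas
        (integrable_const MQ)
        (fun k => .of_forall fun x => by rw [Real.norm_eq_abs]; exact hvbd k x) ?_
      filter_upwards [self_mem_ae_restrict hΩm] with x hx
      have hPk_t : Tendsto (fun k => Pk k x) atTop (𝓝 (P x)) := by
        have hcont : Continuous fun t : ℝ => max α (min β t) :=
          continuous_const.max (continuous_const.min continuous_id)
        exact (hcont.tendsto (p x)).comp (hpt x (subset_closure hx))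
      have hQk_t : Tendsto (fun k => Qk k x) atTop (𝓝 (Q x)) :=
        hPk_t.div (hPk_t.sub tendsto_const_nhds) (sub_ne_zero.2 (hP1 x).ne')
      have h1 : Tendsto (fun k => 1 / Qk k x) atTop (𝓝 (1 / Q x)) :=
        tendsto_const_nhds.div hQk_t (ne_of_gt (lt_trans one_pos (hQ1 x)))
      have h2 : Tendsto (fun k => |g x| ^ Qk k x) atTop (𝓝 (|g x| ^ Q x)) :=
        (Real.continuousAt_rpow (|g x|, Q x)
          (Or.inr (lt_trans one_pos (hQ1 x)))).tendsto.comp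
          (tendsto_const_nhds.prodMk_nhds hQk_t)
      exact h1.mul h2
    have hb_t : Tendsto (fun k => (∫ x, f k x * g x ∂μ) - ∫ x, v k x ∂μ) atTop
        (𝓝 ((∫ x, flim x * g x ∂μ) - ∫ x, V x ∂μ)) := hweakg.sub hc_tendsto
    -- eventual bound by the weighted modular
    have hevk : ∀ᶠ k in atTop,
        ENNReal.ofReal ((∫ x, f k x * g x ∂μ) - ∫ x, v k x ∂μ) ≤
          ∫⁻ x, ENNReal.ofReal ((1 / pk k x) * |f k x| ^ pk k x) ∂μ := by
      filter_upwards [hev] with k hk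
      have hfgk : Integrable (fun x => f k x * g x) μ := by
        have := Integrable.bdd_mul (c := M) (hfint k) hgmeas.aestronglyMeasurable
          (.of_forall hgbdd)
        exact this.congr (.of_forall fun x => mul_comm _ _)
      have hhmeas : AEMeasurable (fun x => |f k x| ^ pk k x) μ :=
        (measurable_abs.comp_aemeasurable (hfmeas k)).pow (hpkmeas k)
      have hhnn : 0 ≤ᵐ[μ] fun x => |f k x| ^ pk k x :=
        .of_forall fun x => Real.rpow_nonneg (abs_nonneg _) _
      have hhint : Integrable (fun x => |f k x| ^ pk k x) μ :=
        ⟨hhmeas.aestronglyMeasurable, (hasFiniteIntegral_iff_ofReal hhnn).2 hk⟩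
      have hwmeas : AEMeasurable (fun x => (1 / pk k x) * |f k x| ^ pk k x) μ :=
        (aemeasurable_const.div (hpkmeas k)).mul hhmeas
      have hwint : Integrable (fun x => (1 / pk k x) * |f k x| ^ pk k x) μ := by
        refine hhint.mono' hwmeas.aestronglyMeasurable ?_
        filter_upwards [self_mem_ae_restrict hΩm] with x hx
        have hpk1 : 1 ≤ pk k x := le_trans hα.le (hbnd k x hx).1
        have hpk0 : 0 < pk k x := lt_of_lt_of_le one_pos hpk1
        rw [Real.norm_eq_abs, abs_mul, abs_of_nonneg (Real.rpow_nonneg (abs_nonneg _) _),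
          abs_of_nonneg (one_div_pos.2 hpk0).le]
        calc (1 / pk k x) * |f k x| ^ pk k x ≤ 1 * |f k x| ^ pk k x :=
              mul_le_mul_of_nonneg_right (by rw [div_le_one hpk0]; exact hpk1)
                (Real.rpow_nonneg (abs_nonneg _) _)
          _ = |f k x| ^ pk k x := one_mul _
      have hyoung : (fun x => f k x * g x) ≤ᵐ[μ]
          fun x => (1 / pk k x) * |f k x| ^ pk k x + v k x := by
        filter_upwards [self_mem_ae_restrict hΩm] with x hx
        have hpkx : pk k x = Pk k x := (hPkeq k x hx).symm
        have hconjx : (pk k x).HolderConjugate (Qk k x) := by rw [hpkx]; exact hconjk k x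
        calc f k x * g x ≤ |f k x| * |g x| := by
              rw [← abs_mul]; exact le_abs_self _
          _ ≤ |f k x| ^ pk k x / pk k x + |g x| ^ Qk k x / Qk k x :=
              Real.young_inequality_of_nonneg (abs_nonneg _) (abs_nonneg _) hconjx
          _ = (1 / pk k x) * |f k x| ^ pk k x + v k x := by
              rw [hvdef]; ring
      have hreal : (∫ x, f k x * g x ∂μ) - (∫ x, v k x ∂μ) ≤
          ∫ x, (1 / pk k x) * |f k x| ^ pk k x ∂μ := by
        have h : (∫ x, f k x * g x ∂μ) ≤
            (∫ x, (1 / pk k x) * |f k x| ^ pk k x ∂μ) + ∫ x, v k x ∂μ := by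
          calc (∫ x, f k x * g x ∂μ)
              ≤ ∫ x, ((1 / pk k x) * |f k x| ^ pk k x + v k x) ∂μ :=
                integral_mono_ae hfgk (hwint.add (hvint k)) hyoung
            _ = (∫ x, (1 / pk k x) * |f k x| ^ pk k x ∂μ) + ∫ x, v k x ∂μ :=
                integral_add hwint (hvint k)
        linarith
      have hwnn : 0 ≤ᵐ[μ] fun x => (1 / pk k x) * |f k x| ^ pk k x := by
        filter_upwards [self_mem_ae_restrict hΩm] with x hx
        have hpk0 : 0 < pk k x := lt_of_lt_of_le hα0 (hbnd k x hx).1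
        exact mul_nonneg (one_div_pos.2 hpk0).le (Real.rpow_nonneg (abs_nonneg _) _)
      calc ENNReal.ofReal ((∫ x, f k x * g x ∂μ) - ∫ x, v k x ∂μ)
          ≤ ENNReal.ofReal (∫ x, (1 / pk k x) * |f k x| ^ pk k x ∂μ) :=
            ENNReal.ofReal_le_ofReal hreal
        _ = ∫⁻ x, ENNReal.ofReal ((1 / pk k x) * |f k x| ^ pk k x) ∂μ :=
            ofReal_integral_eq_lintegral_ofReal hwint hwnn
    -- pass to the liminf
    have hliminf : ENNReal.ofReal ((∫ x, flim x * g x ∂μ) - ∫ x, V x ∂μ) ≤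
        atTop.liminf (fun k => ∫⁻ x, ENNReal.ofReal ((1 / pk k x) * |f k x| ^ pk k x) ∂μ) := by
      have ht : Tendsto
          (fun k => ENNReal.ofReal ((∫ x, f k x * g x ∂μ) - ∫ x, v k x ∂μ)) atTop
          (𝓝 (ENNReal.ofReal ((∫ x, flim x * g x ∂μ) - ∫ x, V x ∂μ))) :=
        (ENNReal.continuous_ofReal.tendsto _).comp hb_t
      rw [← ht.liminf_eq]
      exact liminf_le_liminf hevk
    -- the pointwise lower bound for the limit expression
    have hψnn : ∀ x, 0 ≤ (1 / P x) * m x ^ P x := fun x =>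
      mul_nonneg (one_div_pos.2 (lt_trans one_pos (hP1 x))).le (Real.rpow_nonneg (hm0 x) _)
    have hψmeas : AEMeasurable (fun x => (1 / P x) * m x ^ P x) μ :=
      (aemeasurable_const.div hPmeas).mul (hmmeas.pow hPmeas)
    have hψbd : ∀ x, (1 / P x) * m x ^ P x ≤ ((n : ℝ) + 1) ^ β := by
      intro x
      have h1 : 1 / P x ≤ 1 := by
        rw [div_le_one (lt_trans one_pos (hP1 x))]; exact (hP1 x).le
      have h2 : m x ^ P x ≤ ((n : ℝ) + 1) ^ β := by
        calc m x ^ P x ≤ ((n : ℝ) + 1) ^ P x :=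
              Real.rpow_le_rpow (hm0 x) (hmle x) (le_of_lt (lt_trans one_pos (hP1 x)))
          _ ≤ ((n : ℝ) + 1) ^ β := Real.rpow_le_rpow_of_exponent_le hn1 (hPb x)
      calc (1 / P x) * m x ^ P x ≤ 1 * (((n : ℝ) + 1) ^ β) :=
            mul_le_mul h1 h2 (Real.rpow_nonneg (hm0 x) _) zero_le_one
        _ = ((n : ℝ) + 1) ^ β := one_mul _
    have hψint : Integrable (fun x => (1 / P x) * m x ^ P x) μ :=
      (integrable_const (((n : ℝ) + 1) ^ β)).mono' hψmeas.aestronglyMeasurable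
        (.of_forall fun x => by
          rw [Real.norm_eq_abs, abs_of_nonneg (hψnn x)]; exact hψbd x)
    have hflimg_int : Integrable (fun x => flim x * g x) μ := by
      have := Integrable.bdd_mul (c := M) hflimint hgmeas.aestronglyMeasurable
        (.of_forall hgbdd)
      exact this.congr (.of_forall fun x => mul_comm _ _)
    have hpt_ineq : ∀ x, (1 / P x) * m x ^ P x ≤ flim x * g x - V x := by
      intro x
      have hc := hconj x
      have hgq : |g x| ^ Q x = m x ^ P x := by
        rw [hgabs x, ← Real.rpow_mul (hm0 x), hc.sub_one_mul_conj]
      rw [hVdef]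
      simp only
      rw [hflim_mul_g x, hgq]
      have hmm : m x * m x ^ (P x - 1) = m x ^ P x := by
        rcases eq_or_lt_of_le (hm0 x) with h0 | h0
        · rw [← h0, Real.zero_rpow (ne_of_gt (sub_pos.2 (hP1 x))),
            Real.zero_rpow (ne_of_gt (lt_trans one_pos (hP1 x))), mul_zero]
        · rw [show P x = 1 + (P x - 1) by ring, Real.rpow_add h0, Real.rpow_one]
          have he : 1 + (P x - 1) - 1 = P x - 1 := by ring
          rw [he]
      have h1 : m x ^ P x ≤ |flim x| * m x ^ (P x - 1) := by
        rw [← hmm]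
        exact mul_le_mul_of_nonneg_right (hmflim x) (Real.rpow_nonneg (hm0 x) _)
      have hsum : 1 / P x + 1 / Q x = 1 := by
        have := hc.inv_add_inv_eq_one
        rw [one_div, one_div]; exact this
      have hkey : (1 / P x) * m x ^ P x + (1 / Q x) * m x ^ P x = m x ^ P x := by
        rw [← add_mul, hsum, one_mul]
      linarith
    have hAle : (∫ x, (1 / P x) * m x ^ P x ∂μ) ≤
        (∫ x, flim x * g x ∂μ) - ∫ x, V x ∂μ := by
      rw [← integral_sub hflimg_int hVint]
      exact integral_mono_ae hψint (hflimg_int.sub hVint) (.of_forall hpt_ineq)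
    calc (∫⁻ x, ENNReal.ofReal ((1 / P x) * (min |flim x| ((n : ℝ) + 1)) ^ P x) ∂μ)
        = ENNReal.ofReal (∫ x, (1 / P x) * m x ^ P x ∂μ) :=
          (ofReal_integral_eq_lintegral_ofReal hψint (.of_forall hψnn)).symm
      _ ≤ ENNReal.ofReal ((∫ x, flim x * g x ∂μ) - ∫ x, V x ∂μ) :=
          ENNReal.ofReal_le_ofReal hAle
      _ ≤ _ := hliminf
  -- monotone convergence in the truncation parameter
  have hmono : Tendsto
      (fun n : ℕ => ∫⁻ x, ENNReal.ofReal ((1 / P x) * (min |flim x| ((n : ℝ) + 1)) ^ P x) ∂μ)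
      atTop (𝓝 (∫⁻ x, ENNReal.ofReal ((1 / P x) * |flim x| ^ P x) ∂μ)) := by
    apply lintegral_tendsto_of_tendsto_of_monotone
    · intro n
      exact ((aemeasurable_const.div hPmeas).mul
        (((measurable_abs.comp_aemeasurable hflimmeas).min aemeasurable_const).pow
          hPmeas)).ennreal_ofReal
    · refine .of_forall fun x i j hij => ?_
      apply ENNReal.ofReal_le_ofReal
      have hP0 : 0 < P x := lt_trans one_pos (hP1 x)
      refine mul_le_mul_of_nonneg_left ?_ (one_div_pos.2 hP0).le
      refine Real.rpow_le_rpow (le_min (abs_nonneg _) (by positivity)) ?_ hP0.le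
      refine min_le_min le_rfl ?_
      have : (i : ℝ) ≤ (j : ℝ) := Nat.cast_le.2 hij
      linarith
    · refine .of_forall fun x => ?_
      have hev' : ∀ᶠ k : ℕ in atTop,
          ENNReal.ofReal ((1 / P x) * (min |flim x| ((k : ℝ) + 1)) ^ P x) =
            ENNReal.ofReal ((1 / P x) * |flim x| ^ P x) := by
        filter_upwards [eventually_ge_atTop ⌈|flim x|⌉₊] with k hk
        have : |flim x| ≤ (k : ℝ) + 1 := by
          calc |flim x| ≤ (⌈|flim x|⌉₊ : ℝ) := Nat.le_ceil _
            _ ≤ (k : ℝ) := Nat.cast_le.2 hk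
            _ ≤ (k : ℝ) + 1 := by linarith
        rw [min_eq_left this]
      exact Tendsto.congr' (hev'.mono fun k hk => hk.symm) tendsto_const_nhds
  have hgoal_eq : (∫⁻ x, ENNReal.ofReal ((1 / p x) * |flim x| ^ p x) ∂μ) =
      ∫⁻ x, ENNReal.ofReal ((1 / P x) * |flim x| ^ P x) ∂μ := by
    apply lintegral_congr_ae
    filter_upwards [self_mem_ae_restrict hΩm] with x hx
    rw [hPeq x hx]
  rw [hgoal_eq]
  exact le_of_tendsto hmono (.of_forall key)
end
end
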